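/- arXiv:1902.08006 — 3 statements merged into one kernel-verified Lean document; each statement's English description precedes it below -/
import Mathlib

section
/- (Characterization, hard direction) Let 𝔄 be a family of equivalence structures with no infinite classes. If 𝔄 is finitely separable then 𝔄 is InfEx_≅-learnable: there exists a learner (of arbitrary complexity) that, on every informant for every ω-presentation of every A ∈ 𝔄, converges to an index of a structure isomorphic to A. -/
open Set

/-- An equivalence structure on ℕ. -/
structure EqStruct where
  rel : ℕ → ℕ → Prop
  equiv : Equivalence rel

namespace EqStruct

/-- Isomorphism of equivalence structures. -/
def Isom (A B : EqStruct) : Prop :=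
  ∃ f : ℕ → ℕ, Function.Bijective f ∧ ∀ x y, A.rel x y ↔ B.rel (f x) (f y)

/-- Embedding of equivalence structures. -/
def Embeds (A B : EqStruct) : Prop :=
  ∃ f : ℕ → ℕ, Function.Injective f ∧ ∀ x y, A.rel x y ↔ B.rel (f x) (f y)

/-- Bi-embeddability. -/
def Biembed (A B : EqStruct) : Prop := A.Embeds B ∧ B.Embeds A

/-- The equivalence class of `x`. -/
def classOf (A : EqStruct) (x : ℕ) : Set ℕ := {y | A.rel x y}

/-- The number of equivalence classes of size `k` (counted in `ℕ∞`). -/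
noncomputable def numClasses (A : EqStruct) (k : ℕ∞) : ℕ∞ :=
  {C : Set ℕ | (∃ x, C = A.classOf x) ∧ C.encard = k}.encard

/-- `A` finitely embeds into `B`: every finite substructure `A[s]` embeds into `B`. -/
def FinEmbeds (A B : EqStruct) : Prop :=
  ∀ s : ℕ, ∃ f : ℕ → ℕ, Set.InjOn f (Set.Iio s) ∧
    ∀ x < s, ∀ y < s, (A.rel x y ↔ B.rel (f x) (f y))

end EqStruct

/-- An informant for a structure: lists every pair, labelled correctly. -/
def IsInformant (A : EqStruct) (I : ℕ → (ℕ × ℕ) × Bool) : Prop :=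
  (∀ p : ℕ × ℕ, ∃ n, (I n).1 = p) ∧
  (∀ n, ((I n).2 = true ↔ A.rel (I n).1.1 (I n).1.2))

/-- A learner from informants: `none` is the `?` symbol. -/
abbrev Learner := List ((ℕ × ℕ) × Bool) → Option ℕ

/-- The initial segment `I[n]`. -/
def seg (I : ℕ → (ℕ × ℕ) × Bool) (n : ℕ) : List ((ℕ × ℕ) × Bool) :=
  (List.range n).map I

/-- `M` InfEx-learns `A` up to `sim`, with hypotheses indices into `Me`. -/
def InfExLearns (Me : ℕ → EqStruct) (sim : EqStruct → EqStruct → Prop)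
    (M : Learner) (A : EqStruct) : Prop :=
  ∀ B, B.Isom A → ∀ I, IsInformant B I →
    ∃ e, sim (Me e) B ∧ ∃ N, ∀ n ≥ N, M (seg I n) = some e

/-- `M` finitely learns `A` from informants up to `sim`. -/
def InfFinLearns (Me : ℕ → EqStruct) (sim : EqStruct → EqStruct → Prop)
    (M : Learner) (A : EqStruct) : Prop :=
  ∀ B, B.Isom A → ∀ I, IsInformant B I →
    ∃ e, sim (Me e) B ∧ (∃ n, M (seg I n) = some e) ∧
      ∀ n e', M (seg I n) = some e' → e' = e

/-- A text for a structure: enumerates exactly the related pairs (`none` is pause). -/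
def IsText (A : EqStruct) (T : ℕ → Option (ℕ × ℕ)) : Prop :=
  ∀ x y, A.rel x y ↔ ∃ n, T n = some (x, y)

/-- A learner from texts. -/
abbrev TxtLearner := List (Option (ℕ × ℕ)) → Option ℕ

/-- The initial segment `T[n]` of a text. -/
def tseg (T : ℕ → Option (ℕ × ℕ)) (n : ℕ) : List (Option (ℕ × ℕ)) :=
  (List.range n).map T

/-- `M` TxtEx-learns `A` up to `sim`. -/
def TxtExLearns (Me : ℕ → EqStruct) (sim : EqStruct → EqStruct → Prop)
    (M : TxtLearner) (A : EqStruct) : Prop :=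
  ∀ B, B.Isom A → ∀ T, IsText B T →
    ∃ e, sim (Me e) B ∧ ∃ N, ∀ n ≥ N, M (tseg T n) = some e

/-- `σ` describes a finite part of `A`: it is an initial segment of an informant for `A`. -/
def DescribesPart (A : EqStruct) (σ : List ((ℕ × ℕ) × Bool)) : Prop :=
  ∃ I, IsInformant A I ∧ σ = seg I σ.length

/-- The character of `A`: pairs `(k, i)` such that `A` has at least `i` classes of size `k`. -/
noncomputable def charOf (A : EqStruct) : Set (ℕ∞ × ℕ) :=
  {p | (p.2 : ℕ∞) ≤ A.numClasses p.1}

/-- A family has finitely many isomorphism types. -/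
def FinTypes (𝔅 : Set EqStruct) : Prop :=
  ∃ T : Set EqStruct, T.Finite ∧ ∀ B ∈ 𝔅, ∃ C ∈ T, B.Isom C

/-- `S` is a limit of the subfamily `𝔅`. -/
noncomputable def IsLimitOf (S : EqStruct) (𝔅 : Set EqStruct) : Prop :=
  (FinTypes 𝔅 ∧ ∃ A ∈ 𝔅, ¬ A.Isom S ∧ A.FinEmbeds S ∧ charOf S ⊆ charOf A) ∨
  (¬ FinTypes 𝔅 ∧ (∀ A ∈ 𝔅, ¬ A.Isom S ∧ A.FinEmbeds S) ∧
    charOf S ⊆ {p | ¬ FinTypes {B | B ∈ 𝔅 ∧ p ∈ charOf B}})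

/-- `𝔄` is finitely separable: no subfamily of `𝔄` has a limit in `𝔄`. -/
noncomputable def FinitelySeparable (𝔄 : Set EqStruct) : Prop :=
  ∀ 𝔅 ⊆ 𝔄, ∀ S ∈ 𝔄, ¬ IsLimitOf S 𝔅

/-! ### Auxiliary development for `stmt12` -/

namespace S12

open EqStruct

attribute [local instance] Classical.propDecidable

noncomputable section

/-! #### Basic facts about equivalence structures -/

lemma mem_classOf_self (A : EqStruct) (x : ℕ) : x ∈ A.classOf x := A.equiv.refl x

lemma classOf_eq_of_mem {A : EqStruct} {x y : ℕ} (h : y ∈ A.classOf x) :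
    A.classOf y = A.classOf x := by
  ext z
  constructor
  · exact fun hz => A.equiv.trans h hz
  · exact fun hz => A.equiv.trans (A.equiv.symm h) hz

lemma rel_of_mem_classOf {A : EqStruct} {x u v : ℕ} (hu : u ∈ A.classOf x)
    (hv : v ∈ A.classOf x) : A.rel u v :=
  A.equiv.trans (A.equiv.symm hu) hv

lemma isom_refl (A : EqStruct) : A.Isom A :=
  ⟨id, Function.bijective_id, fun _ _ => Iff.rfl⟩

lemma isom_symm {A B : EqStruct} (h : A.Isom B) : B.Isom A := by
  obtain ⟨f, hf, hrel⟩ := h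
  obtain ⟨g, hgf, hfg⟩ := Function.bijective_iff_has_inverse.mp hf
  refine ⟨g, ⟨fun a b hab => ?_, fun a => ⟨f a, hgf a⟩⟩, fun x y => ?_⟩
  · have := congrArg f hab
    rwa [hfg, hfg] at this
  · rw [hrel (g x) (g y), hfg, hfg]

lemma isom_trans {A B C : EqStruct} (h1 : A.Isom B) (h2 : B.Isom C) : A.Isom C := by
  obtain ⟨f, hf, hrf⟩ := h1
  obtain ⟨g, hg, hrg⟩ := h2
  exact ⟨g ∘ f, hg.comp hf, fun x y => (hrf x y).trans (hrg (f x) (f y))⟩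

/-- Image of a class under an isomorphism. -/
lemma isom_image_classOf {A B : EqStruct} {f : ℕ → ℕ} (hf : Function.Bijective f)
    (hrel : ∀ x y, A.rel x y ↔ B.rel (f x) (f y)) (x : ℕ) :
    f '' A.classOf x = B.classOf (f x) := by
  ext y
  constructor
  · rintro ⟨z, hz, rfl⟩; exact (hrel x z).mp hz
  · intro hy
    obtain ⟨z, rfl⟩ := hf.2 y
    exact ⟨z, (hrel x z).mpr hy, rfl⟩

/-- Generic invariance of class counts under isomorphism. -/
lemma encard_classes_pred {A B : EqStruct} (h : A.Isom B) (P : ℕ∞ → Prop) :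
    {C : Set ℕ | (∃ x, C = A.classOf x) ∧ P C.encard}.encard =
    {C : Set ℕ | (∃ x, C = B.classOf x) ∧ P C.encard}.encard := by
  obtain ⟨f, hf, hrel⟩ := h
  have hicard : ∀ D : Set ℕ, (f '' D).encard = D.encard :=
    fun D => (hf.1.injOn).encard_image
  have himg : (Set.image f) '' {C : Set ℕ | (∃ x, C = A.classOf x) ∧ P C.encard} =
      {C : Set ℕ | (∃ x, C = B.classOf x) ∧ P C.encard} := by
    ext C
    simp only [Set.mem_image, Set.mem_setOf_eq]
    constructor
    · rintro ⟨D, ⟨⟨x, rfl⟩, hP⟩, rfl⟩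
      exact ⟨⟨f x, (isom_image_classOf hf hrel x)⟩, by rwa [hicard]⟩
    · rintro ⟨⟨y, rfl⟩, hP⟩
      obtain ⟨x, rfl⟩ := hf.2 y
      exact ⟨A.classOf x, ⟨⟨x, rfl⟩, by rwa [← isom_image_classOf hf hrel x, hicard] at hP⟩,
        isom_image_classOf hf hrel x⟩
  calc {C : Set ℕ | (∃ x, C = A.classOf x) ∧ P C.encard}.encard
      = ((Set.image f) '' {C : Set ℕ | (∃ x, C = A.classOf x) ∧ P C.encard}).encard :=
        ((Set.image_injective.mpr hf.1).injOn.encard_image).symm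
    _ = _ := by rw [himg]

lemma isom_numClasses_eq {A B : EqStruct} (h : A.Isom B) (k : ℕ∞) :
    A.numClasses k = B.numClasses k :=
  encard_classes_pred h (fun c => c = k)

/-- `DD A k` : number of classes of size at least `k`. -/
def DD (A : EqStruct) (k : ℕ) : ℕ∞ :=
  {C : Set ℕ | (∃ x, C = A.classOf x) ∧ (k : ℕ∞) ≤ C.encard}.encard

/-- `chi A k` : number of classes of size exactly `k`. -/
def chi (A : EqStruct) (k : ℕ) : ℕ∞ := A.numClasses (k : ℕ∞)

lemma isom_DD_eq {A B : EqStruct} (h : A.Isom B) (k : ℕ) : DD A k = DD B k :=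
  encard_classes_pred h (fun c => (k : ℕ∞) ≤ c)

lemma isom_chi_eq {A B : EqStruct} (h : A.Isom B) (k : ℕ) : chi A k = chi B k :=
  isom_numClasses_eq h _

lemma isom_finClasses {A B : EqStruct} (h : B.Isom A)
    (hA : ∀ x, (A.classOf x).Finite) : ∀ x, (B.classOf x).Finite := by
  obtain ⟨f, hf, hrel⟩ := h
  intro x
  have himg : f '' B.classOf x = A.classOf (f x) := isom_image_classOf hf hrel x
  have : (f '' B.classOf x).Finite := himg ▸ hA (f x)
  exact Set.Finite.of_finite_image this (hf.1.injOn)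

lemma DD_antitone (A : EqStruct) {k k' : ℕ} (h : k ≤ k') : DD A k' ≤ DD A k := by
  apply Set.encard_le_encard
  rintro C ⟨hC, hk⟩
  exact ⟨hC, le_trans (by exact_mod_cast h) hk⟩

lemma numClasses_top_eq_zero {A : EqStruct} (hA : ∀ x, (A.classOf x).Finite) :
    A.numClasses ⊤ = 0 := by
  rw [EqStruct.numClasses, Set.encard_eq_zero]
  ext C
  simp only [Set.mem_setOf_eq, Set.mem_empty_iff_false, iff_false, not_and]
  rintro ⟨x, rfl⟩ htop
  have : ¬ (A.classOf x).encard = ⊤ := Set.encard_ne_top_iff.mpr (hA x)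
  exact this htop

/-! #### ℕ∞ helpers -/

lemma findGreatest_congr {p q : ℕ → Prop} [DecidablePred p] [DecidablePred q]
    (h : ∀ n, p n ↔ q n) (b : ℕ) : Nat.findGreatest p b = Nat.findGreatest q b := by
  induction b with
  | zero => rfl
  | succ n ih =>
      rw [Nat.findGreatest_succ, Nat.findGreatest_succ, ih]
      exact if_congr (h _) rfl rfl

lemma enat_le_of_forall_nat_le {a b : ℕ∞} (h : ∀ c : ℕ, (c : ℕ∞) ≤ a → (c : ℕ∞) ≤ b) :
    a ≤ b := by
  refine le_of_not_gt fun hba => ?_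
  have hbt : b ≠ ⊤ := (hba.trans_le le_top).ne
  lift b to ℕ using hbt
  have h1 : ((b + 1 : ℕ) : ℕ∞) ≤ a := by
    push_cast
    exact ENat.add_one_le_iff (by simp) |>.mpr hba
  have := h (b + 1) h1
  have : ((b+1 : ℕ) : ℕ∞) ≤ (b : ℕ∞) := this
  rw [Nat.cast_le] at this
  omega

/-! #### Window machinery -/

/-- The class of `x` in the window `[0, W)` with respect to a relation `r`. -/
def cls (r : ℕ → ℕ → Prop) (W x : ℕ) : Set ℕ := {y | y < W ∧ r x y}

/-- The collection of window classes. -/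
def wcl (r : ℕ → ℕ → Prop) (W : ℕ) : Set (Set ℕ) := {C | ∃ x, x < W ∧ C = cls r W x}

/-- Number of window classes of size at least `k`. -/
def CGe (r : ℕ → ℕ → Prop) (W k : ℕ) : ℕ∞ :=
  {C | C ∈ wcl r W ∧ (k : ℕ∞) ≤ C.encard}.encard

/-- Number of window classes of size exactly `k` contained in `[0, v)`. -/
def CFin (r : ℕ → ℕ → Prop) (W v k : ℕ) : ℕ∞ :=
  {C | C ∈ wcl r W ∧ C ⊆ Set.Iio v ∧ C.encard = (k : ℕ∞)}.encard

/-- Number of full classes of `B` of size exactly `k` contained in `[0, v)`. -/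
def FB (B : EqStruct) (v k : ℕ) : ℕ∞ :=
  {C : Set ℕ | (∃ x, C = B.classOf x) ∧ C ⊆ Set.Iio v ∧ C.encard = (k : ℕ∞)}.encard

lemma cls_eqStruct (B : EqStruct) (W x : ℕ) :
    cls B.rel W x = B.classOf x ∩ Set.Iio W := by
  ext y; constructor
  · rintro ⟨h1, h2⟩; exact ⟨h2, h1⟩
  · rintro ⟨h1, h2⟩; exact ⟨h2, h1⟩

lemma wcl_spec {B : EqStruct} {W : ℕ} {C : Set ℕ} (h : C ∈ wcl B.rel W) :
    ∃ x, x < W ∧ x ∈ C ∧ C = B.classOf x ∩ Set.Iio W := by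
  obtain ⟨x, hx, rfl⟩ := h
  exact ⟨x, hx, ⟨hx, mem_classOf_self B x⟩, cls_eqStruct B W x⟩

/-- The true class spanned by a window class. -/
def uCl (B : EqStruct) (C : Set ℕ) : Set ℕ := ⋃ y ∈ C, B.classOf y

lemma uCl_spec {B : EqStruct} {W : ℕ} {C : Set ℕ} (h : C ∈ wcl B.rel W) :
    ∃ x, x < W ∧ x ∈ C ∧ C = B.classOf x ∩ Set.Iio W ∧ uCl B C = B.classOf x := by
  obtain ⟨x, hx, hxC, hC⟩ := wcl_spec h
  refine ⟨x, hx, hxC, hC, ?_⟩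
  ext z
  simp only [uCl, Set.mem_iUnion, exists_prop]
  constructor
  · rintro ⟨y, hy, hz⟩
    have hy' : y ∈ B.classOf x := by rw [hC] at hy; exact hy.1
    rw [classOf_eq_of_mem hy'] at hz; exact hz
  · intro hz; exact ⟨x, hxC, hz⟩

lemma subset_uCl {B : EqStruct} {W : ℕ} {C : Set ℕ} (h : C ∈ wcl B.rel W) :
    C ⊆ uCl B C := by
  obtain ⟨x, _, _, hC, hu⟩ := uCl_spec h
  rw [hu, hC]; exact Set.inter_subset_left

lemma uCl_injOn {B : EqStruct} {W : ℕ} {S : Set (Set ℕ)} (hS : S ⊆ wcl B.rel W) :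
    Set.InjOn (uCl B) S := by
  intro C hC C' hC' heq
  obtain ⟨x, hx, hxC, hCe, hu⟩ := uCl_spec (hS hC)
  obtain ⟨x', hx', hxC', hCe', hu'⟩ := uCl_spec (hS hC')
  rw [hu, hu'] at heq
  rw [hCe, hCe', heq]

lemma CGe_le_DD (B : EqStruct) (W k : ℕ) : CGe B.rel W k ≤ DD B k := by
  rw [CGe, show {C | C ∈ wcl B.rel W ∧ (k : ℕ∞) ≤ C.encard}.encard =
      ((uCl B) '' {C | C ∈ wcl B.rel W ∧ (k : ℕ∞) ≤ C.encard}).encard from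
      ((uCl_injOn (fun C hC => hC.1)).encard_image).symm]
  apply Set.encard_le_encard
  rintro D ⟨C, ⟨hCw, hCk⟩, rfl⟩
  obtain ⟨x, hx, hxC, hCe, hu⟩ := uCl_spec hCw
  refine ⟨⟨x, hu⟩, le_trans hCk (Set.encard_le_encard (subset_uCl hCw))⟩

lemma DD_lower (B : EqStruct) (k c : ℕ) (h : (c : ℕ∞) ≤ DD B k) :
    ∃ W₀, ∀ W, W₀ ≤ W → (c : ℕ∞) ≤ CGe B.rel W k := by
  obtain ⟨t, hts, htc⟩ := Set.exists_subset_encard_eq h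
  have htfin : t.Finite := Set.finite_of_encard_eq_coe htc
  have h1 : ∀ C : Set ℕ, ∃ (x : ℕ) (u : Set ℕ), C ∈ t →
      C = B.classOf x ∧ u ⊆ C ∧ u.encard = (k : ℕ∞) := by
    intro C
    by_cases hC : C ∈ t
    · obtain ⟨⟨x, hx⟩, hk⟩ := hts hC
      obtain ⟨u, hu1, hu2⟩ := Set.exists_subset_encard_eq hk
      exact ⟨x, u, fun _ => ⟨hx, hu1, hu2⟩⟩
    · exact ⟨0, ∅, fun hc => absurd hc hC⟩
  choose xf uf hf using h1
  have hUfin : (⋃ C ∈ t, (uf C ∪ {xf C})).Finite := by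
    refine htfin.biUnion fun C hC => ?_
    have := hf C hC
    exact Set.Finite.union (Set.finite_of_encard_eq_coe this.2.2) (Set.finite_singleton _)
  obtain ⟨b, hb⟩ := hUfin.bddAbove
  refine ⟨b + 1, fun W hW => ?_⟩
  have hmem : ∀ C ∈ t, ∀ y ∈ uf C ∪ {xf C}, y < W := by
    intro C hC y hy
    have : y ≤ b := hb (Set.mem_biUnion hC hy)
    omega
  have hxmem : ∀ C ∈ t, xf C ∈ C := by
    intro C hC
    have h1 := mem_classOf_self B (xf C)
    rwa [← (hf C hC).1] at h1
  have hinj : Set.InjOn (fun C => C ∩ Set.Iio W) t := by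
    intro C hC C' hC' heq
    have heq' : C ∩ Set.Iio W = C' ∩ Set.Iio W := heq
    have hx : xf C ∈ C ∩ Set.Iio W :=
      ⟨hxmem C hC, hmem C hC _ (Set.mem_union_right _ rfl)⟩
    rw [heq'] at hx
    have h1 : C = B.classOf (xf C) := (hf C hC).1
    have h2 : C' = B.classOf (xf C') := (hf C' hC').1
    have h3 : B.classOf (xf C) = B.classOf (xf C') :=
      classOf_eq_of_mem (h2 ▸ hx.1)
    rw [h1, h2, ← h3]
  calc (c : ℕ∞) = t.encard := htc.symm
    _ = ((fun C => C ∩ Set.Iio W) '' t).encard := (hinj.encard_image).symm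
    _ ≤ CGe B.rel W k := by
        apply Set.encard_le_encard
        rintro D ⟨C, hC, rfl⟩
        obtain ⟨hcls, husub, huk⟩ := hf C hC
        have hxW : xf C < W := hmem C hC _ (Set.mem_union_right _ rfl)
        constructor
        · exact ⟨xf C, hxW, by rw [cls_eqStruct, ← hcls]⟩
        · rw [← huk]
          apply Set.encard_le_encard
          intro y hy
          exact ⟨husub hy, hmem C hC _ (Set.mem_union_left _ hy)⟩

lemma Tv_exists (B : EqStruct) (hBfin : ∀ x, (B.classOf x).Finite) (v : ℕ) :
    ∃ T, v ≤ T ∧ ∀ x, x < v → B.classOf x ⊆ Set.Iio T := by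
  have hU : (⋃ x ∈ Set.Iio v, B.classOf x).Finite :=
    (Set.finite_Iio v).biUnion fun x _ => hBfin x
  obtain ⟨b, hb⟩ := hU.bddAbove
  refine ⟨max v (b + 1), le_max_left _ _, fun x hx y hy => ?_⟩
  have : y ≤ b := hb (Set.mem_biUnion (by exact hx) hy)
  simp only [Set.mem_Iio]
  omega

lemma CFin_eq_FB (B : EqStruct) {v T W : ℕ} (hT : ∀ x, x < v → B.classOf x ⊆ Set.Iio T)
    (hvT : v ≤ T) (hW : T ≤ W) (k : ℕ) : CFin B.rel W v k = FB B v k := by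
  rw [CFin, FB]
  congr 1
  ext C
  simp only [Set.mem_setOf_eq]
  constructor
  · rintro ⟨hCw, hCv, hCk⟩
    obtain ⟨x, hx, hxC, hCe⟩ := wcl_spec hCw
    have hxv : x < v := hCv hxC
    have hcl : B.classOf x ⊆ Set.Iio W := fun y hy =>
      lt_of_lt_of_le (hT x hxv hy) hW
    have : C = B.classOf x := by
      rw [hCe, Set.inter_eq_self_of_subset_left hcl]
    exact ⟨⟨x, this⟩, hCv, hCk⟩
  · rintro ⟨⟨x, rfl⟩, hCv, hCk⟩
    have hxv : x < v := hCv (mem_classOf_self B x)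
    have hcl : B.classOf x ⊆ Set.Iio W := fun y hy =>
      lt_of_lt_of_le (hT x hxv hy) hW
    refine ⟨⟨x, lt_of_lt_of_le (lt_of_lt_of_le hxv hvT) hW, ?_⟩, hCv, hCk⟩
    rw [cls_eqStruct, Set.inter_eq_self_of_subset_left hcl]

lemma FB_le_chi (B : EqStruct) (v k : ℕ) : FB B v k ≤ chi B k := by
  apply Set.encard_le_encard
  rintro C ⟨h1, _, h3⟩
  exact ⟨h1, h3⟩

lemma FB_reaches (B : EqStruct) (k c : ℕ) (h : (c : ℕ∞) ≤ chi B k) :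
    ∃ v, (c : ℕ∞) ≤ FB B v k := by
  obtain ⟨t, hts, htc⟩ := Set.exists_subset_encard_eq h
  have htfin : t.Finite := Set.finite_of_encard_eq_coe htc
  have hU : (⋃ C ∈ t, C).Finite := by
    refine htfin.biUnion fun C hC => ?_
    have := (hts hC).2
    exact Set.finite_of_encard_eq_coe this
  obtain ⟨b, hb⟩ := hU.bddAbove
  refine ⟨b + 1, ?_⟩
  rw [← htc]
  apply Set.encard_le_encard
  intro C hC
  obtain ⟨hC1, hC2⟩ := hts hC
  refine ⟨hC1, fun y hy => ?_, hC2⟩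
  have : y ≤ b := hb (Set.mem_biUnion hC hy)
  simp only [Set.mem_Iio]; omega

/-- Bound on class sizes when there are finitely many classes of size `≥ k₀`. -/
lemma sizes_bounded (B : EqStruct) (hBfin : ∀ x, (B.classOf x).Finite) {k₀ : ℕ}
    (h : DD B k₀ ≠ ⊤) :
    ∃ K : ℕ, k₀ ≤ K ∧ ∀ k : ℕ, K < k → DD B k = 0 := by
  have hCL : {C : Set ℕ | (∃ x, C = B.classOf x) ∧ (k₀ : ℕ∞) ≤ C.encard}.Finite :=
    Set.encard_ne_top_iff.mp h
  have himg : ((fun C : Set ℕ => C.encard.toNat) ''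
      {C : Set ℕ | (∃ x, C = B.classOf x) ∧ (k₀ : ℕ∞) ≤ C.encard}).Finite :=
    hCL.image _
  obtain ⟨b, hb⟩ := himg.bddAbove
  refine ⟨k₀ + b, Nat.le_add_right _ _, fun k hk => ?_⟩
  rw [DD, Set.encard_eq_zero]
  ext C
  simp only [Set.mem_setOf_eq, Set.mem_empty_iff_false, iff_false, not_and]
  rintro ⟨x, rfl⟩ hkc
  have hfin : (B.classOf x).Finite := hBfin x
  have hk0k : (k₀ : ℕ∞) ≤ (k : ℕ∞) := by exact_mod_cast (by omega : k₀ ≤ k)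
  have hCLmem : B.classOf x ∈
      {C : Set ℕ | (∃ x, C = B.classOf x) ∧ (k₀ : ℕ∞) ≤ C.encard} :=
    ⟨⟨x, rfl⟩, le_trans hk0k hkc⟩
  have hble : (B.classOf x).encard.toNat ≤ b :=
    hb (Set.mem_image_of_mem (fun C : Set ℕ => C.encard.toNat) hCLmem)
  have hcoe : ((B.classOf x).encard.toNat : ℕ∞) = (B.classOf x).encard :=
    ENat.coe_toNat (Set.encard_ne_top_iff.mpr hfin)
  have : (k : ℕ∞) ≤ ((B.classOf x).encard.toNat : ℕ∞) := by rw [hcoe]; exact hkc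
  rw [Nat.cast_le] at this
  omega

/-! #### The greedy matching lemma and `FinEmbeds` construction -/

lemma inj_of_encard_le_aux : ∀ (n : ℕ) (C t : Set ℕ), C.encard = (n : ℕ∞) →
    C.encard ≤ t.encard → ∃ j : ℕ → ℕ, Set.InjOn j C ∧ ∀ x ∈ C, j x ∈ t := by
  intro n
  induction n with
  | zero =>
      intro C t hC _
      rw [Nat.cast_zero, Set.encard_eq_zero] at hC
      subst hC
      exact ⟨id, by simp [Set.InjOn], by simp⟩
  | succ m ih =>
      intro C t hC hle
      have hCne : C.Nonempty := by
        rw [← Set.one_le_encard_iff_nonempty, hC]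
        exact_mod_cast Nat.one_le_iff_ne_zero.mpr (Nat.succ_ne_zero m)
      obtain ⟨a, ha⟩ := hCne
      have htne : t.Nonempty := by
        rw [← Set.one_le_encard_iff_nonempty]
        refine le_trans ?_ hle
        rw [hC]
        exact_mod_cast Nat.one_le_iff_ne_zero.mpr (Nat.succ_ne_zero m)
      obtain ⟨b, hb⟩ := htne
      have hC' : (C \ {a}).encard = (m : ℕ∞) := by
        have h1 : (C \ {a}).encard + 1 = C.encard := Set.encard_diff_singleton_add_one ha
        rw [hC] at h1
        have : ((m : ℕ∞) + 1 : ℕ∞) = ((m + 1 : ℕ) : ℕ∞) := by push_cast; ring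
        rw [← this] at h1
        exact WithTop.add_right_cancel (by simp : (1 : ℕ∞) ≠ ⊤) h1
      have hle' : (C \ {a}).encard ≤ (t \ {b}).encard := by
        have h1 : (t \ {b}).encard + 1 = t.encard := Set.encard_diff_singleton_add_one hb
        have h2 : (C \ {a}).encard + 1 ≤ (t \ {b}).encard + 1 := by
          rw [Set.encard_diff_singleton_add_one ha, h1]; exact hle
        exact (WithTop.add_le_add_iff_right (by simp : (1 : ℕ∞) ≠ ⊤)).mp h2
      obtain ⟨j', hj'inj, hj'mem⟩ := ih (C \ {a}) (t \ {b}) hC' hle'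
      refine ⟨fun x => if x = a then b else j' x, ?_, ?_⟩
      · intro x hx y hy hxy
        by_cases hxa : x = a <;> by_cases hya : y = a
        · rw [hxa, hya]
        · simp only [hxa, if_pos rfl, if_neg hya] at hxy
          exact absurd hxy.symm (hj'mem y ⟨hy, hya⟩).2
        · simp only [hya, if_pos rfl, if_neg hxa] at hxy
          exact absurd hxy (hj'mem x ⟨hx, hxa⟩).2
        · simp only [if_neg hxa, if_neg hya] at hxy
          exact hj'inj ⟨hx, hxa⟩ ⟨hy, hya⟩ hxy
      · intro x hx
        by_cases hxa : x = a
        · simp only [hxa, if_pos rfl]; exact hb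
        · simp only [if_neg hxa]; exact (hj'mem x ⟨hx, hxa⟩).1

lemma inj_of_encard_le {C t : Set ℕ} (hC : C.Finite) (h : C.encard ≤ t.encard) :
    ∃ j : ℕ → ℕ, Set.InjOn j C ∧ ∀ x ∈ C, j x ∈ t := by
  have hne : C.encard ≠ ⊤ := Set.encard_ne_top_iff.mpr hC
  exact inj_of_encard_le_aux C.encard.toNat C t (ENat.coe_toNat hne).symm h

lemma greedy_matching :
    ∀ (n : ℕ) (TS : Set (Set ℕ)) (F : Finset (Set ℕ)), F.card = n →
      (∀ C ∈ F, (C : Set ℕ).Nonempty ∧ (C : Set ℕ).Finite) →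
      (∀ k : ℕ, 1 ≤ k →
        ((F.filter (fun C => (k : ℕ∞) ≤ C.encard)).card : ℕ∞) ≤
          {Y | Y ∈ TS ∧ (k : ℕ∞) ≤ Y.encard}.encard) →
      ∃ g : Set ℕ → Set ℕ, Set.InjOn g F ∧
        ∀ C ∈ F, g C ∈ TS ∧ C.encard ≤ (g C).encard := by
  intro n
  induction n with
  | zero =>
      intro TS F hcard _ _
      rw [Finset.card_eq_zero] at hcard
      subst hcard
      exact ⟨id, by simp [Set.InjOn], by simp⟩
  | succ m ih =>
      intro TS F hcard hne hcount
      have hFne : F.Nonempty := Finset.card_pos.mp (by omega)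
      obtain ⟨C₀, hC₀F, hmax⟩ := Finset.exists_max_image F (fun C => C.encard) hFne
      have hC₀fin : (C₀ : Set ℕ).Finite := (hne C₀ hC₀F).2
      have hC₀top : C₀.encard ≠ ⊤ := Set.encard_ne_top_iff.mpr hC₀fin
      set k₀ : ℕ := C₀.encard.toNat with hk₀
      have hk₀coe : (k₀ : ℕ∞) = C₀.encard := ENat.coe_toNat hC₀top
      have hk₀pos : 1 ≤ k₀ := by
        by_contra hcon
        have : k₀ = 0 := by omega
        rw [this] at hk₀coe
        have : C₀ = ∅ := by
          rw [← Set.encard_eq_zero, ← hk₀coe]; rfl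
        exact Set.not_nonempty_empty (this ▸ (hne C₀ hC₀F).1)
      -- find a target for C₀
      have h1 : (1 : ℕ∞) ≤ {Y | Y ∈ TS ∧ (k₀ : ℕ∞) ≤ Y.encard}.encard := by
        refine le_trans ?_ (hcount k₀ hk₀pos)
        have : C₀ ∈ F.filter (fun C => (k₀ : ℕ∞) ≤ C.encard) :=
          Finset.mem_filter.mpr ⟨hC₀F, le_of_eq hk₀coe⟩
        have hpos : 1 ≤ (F.filter (fun C => (k₀ : ℕ∞) ≤ C.encard)).card :=
          Finset.card_pos.mpr ⟨C₀, this⟩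
        exact_mod_cast hpos
      obtain ⟨Y₀, hY₀⟩ := Set.one_le_encard_iff_nonempty.mp h1
      -- recurse
      have hcount' : ∀ k : ℕ, 1 ≤ k →
          (((F.erase C₀).filter (fun C => (k : ℕ∞) ≤ C.encard)).card : ℕ∞) ≤
            {Y | Y ∈ TS \ {Y₀} ∧ (k : ℕ∞) ≤ Y.encard}.encard := by
        intro k hk
        by_cases hkle : (k : ℕ∞) ≤ C₀.encard
        · have hfe : (F.erase C₀).filter (fun C => (k : ℕ∞) ≤ C.encard) =
              (F.filter (fun C => (k : ℕ∞) ≤ C.encard)).erase C₀ :=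
            Finset.filter_erase _ C₀ F
          have hC₀f : C₀ ∈ F.filter (fun C => (k : ℕ∞) ≤ C.encard) :=
            Finset.mem_filter.mpr ⟨hC₀F, hkle⟩
          have hY₀f : Y₀ ∈ {Y | Y ∈ TS ∧ (k : ℕ∞) ≤ Y.encard} :=
            ⟨hY₀.1, le_trans hkle (hk₀coe ▸ hY₀.2)⟩
          have hseq : {Y | Y ∈ TS \ {Y₀} ∧ (k : ℕ∞) ≤ Y.encard} =
              {Y | Y ∈ TS ∧ (k : ℕ∞) ≤ Y.encard} \ {Y₀} := by
            ext Y
            simp only [Set.mem_setOf_eq, Set.mem_diff, Set.mem_singleton_iff]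
            tauto
          have henc : {Y | Y ∈ TS \ {Y₀} ∧ (k : ℕ∞) ≤ Y.encard}.encard + 1 =
              {Y | Y ∈ TS ∧ (k : ℕ∞) ≤ Y.encard}.encard := by
            rw [hseq]
            exact Set.encard_diff_singleton_add_one hY₀f
          have hcc : (((F.erase C₀).filter (fun C => (k : ℕ∞) ≤ C.encard)).card : ℕ∞) + 1 =
              ((F.filter (fun C => (k : ℕ∞) ≤ C.encard)).card : ℕ∞) := by
            rw [hfe, Finset.card_erase_of_mem hC₀f]
            have h1c : 1 ≤ (F.filter (fun C => (k : ℕ∞) ≤ C.encard)).card :=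
              Finset.card_pos.mpr ⟨C₀, hC₀f⟩
            have harith : ((F.filter (fun C => (k : ℕ∞) ≤ C.encard)).card - 1) + 1 =
                (F.filter (fun C => (k : ℕ∞) ≤ C.encard)).card := by omega
            exact_mod_cast congrArg (Nat.cast (R := ℕ∞)) harith
          have := hcount k hk
          rw [← hcc, ← henc] at this
          exact (WithTop.add_le_add_iff_right (by simp : (1 : ℕ∞) ≠ ⊤)).mp this
        · have : (F.erase C₀).filter (fun C => (k : ℕ∞) ≤ C.encard) = ∅ := by
            rw [Finset.filter_eq_empty_iff]
            intro C hC
            have hCF : C ∈ F := Finset.mem_of_mem_erase hC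
            exact fun hkC => hkle (le_trans hkC (hmax C hCF))
          rw [this]
          simp
      have hne' : ∀ C ∈ F.erase C₀, (C : Set ℕ).Nonempty ∧ (C : Set ℕ).Finite :=
        fun C hC => hne C (Finset.mem_of_mem_erase hC)
      have hcard' : (F.erase C₀).card = m := by
        rw [Finset.card_erase_of_mem hC₀F, hcard]; omega
      obtain ⟨g', hg'inj, hg'⟩ := ih (TS \ {Y₀}) (F.erase C₀) hcard' hne' hcount'
      refine ⟨fun C => if C = C₀ then Y₀ else g' C, ?_, ?_⟩
      · intro C hC D hD hCD
        simp only at hCD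
        by_cases hC0 : C = C₀ <;> by_cases hD0 : D = C₀
        · rw [hC0, hD0]
        · rw [if_pos hC0, if_neg hD0] at hCD
          have : g' D ∈ TS \ {Y₀} :=
            (hg' D (Finset.mem_erase.mpr ⟨hD0, hD⟩)).1
          exact absurd hCD.symm this.2
        · rw [if_neg hC0, if_pos hD0] at hCD
          have : g' C ∈ TS \ {Y₀} :=
            (hg' C (Finset.mem_erase.mpr ⟨hC0, hC⟩)).1
          exact absurd hCD this.2
        · rw [if_neg hC0, if_neg hD0] at hCD
          exact hg'inj (Finset.mem_coe.mpr (Finset.mem_erase.mpr ⟨hC0, hC⟩))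
            (Finset.mem_coe.mpr (Finset.mem_erase.mpr ⟨hD0, hD⟩)) hCD
      · intro C hC
        by_cases hC0 : C = C₀
        · subst hC0
          simp only [if_pos rfl]
          exact ⟨hY₀.1, hk₀coe ▸ hY₀.2⟩
        · simp only [if_neg hC0]
          have h2 := hg' C (Finset.mem_erase.mpr ⟨hC0, hC⟩)
          exact ⟨h2.1.1, h2.2⟩

lemma mem_cls_self {B : EqStruct} {W x : ℕ} (hx : x < W) : x ∈ cls B.rel W x :=
  ⟨hx, B.equiv.refl x⟩

lemma cls_congr_of_rel {B : EqStruct} {W x y : ℕ} (h : B.rel x y) :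
    cls B.rel W x = cls B.rel W y := by
  ext z
  exact ⟨fun hz => ⟨hz.1, B.equiv.trans (B.equiv.symm h) hz.2⟩,
    fun hz => ⟨hz.1, B.equiv.trans h hz.2⟩⟩

lemma wcl_finite (r : ℕ → ℕ → Prop) (W : ℕ) : (wcl r W).Finite := by
  have : wcl r W = (fun x => cls r W x) '' Set.Iio W := by
    ext C
    simp only [wcl, Set.mem_image, Set.mem_Iio, Set.mem_setOf_eq]
    constructor
    · rintro ⟨x, hx, rfl⟩; exact ⟨x, hx, rfl⟩
    · rintro ⟨x, hx, rfl⟩; exact ⟨x, hx, rfl⟩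
  rw [this]
  exact (Set.finite_Iio W).image _

lemma cls_finite (r : ℕ → ℕ → Prop) (W x : ℕ) : (cls r W x).Finite :=
  (Set.finite_Iio W).subset fun _ hz => hz.1

lemma finEmbeds_of_DD_le {A' S : EqStruct} (hD : ∀ k : ℕ, 1 ≤ k → DD A' k ≤ DD S k) :
    A'.FinEmbeds S := by
  intro s
  have hwfin : (wcl A'.rel s).Finite := wcl_finite A'.rel s
  set F : Finset (Set ℕ) := hwfin.toFinset with hF
  have hmemF : ∀ C : Set ℕ, C ∈ F ↔ C ∈ wcl A'.rel s := fun C => Set.Finite.mem_toFinset _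
  have hne : ∀ C ∈ F, (C : Set ℕ).Nonempty ∧ (C : Set ℕ).Finite := by
    intro C hC
    obtain ⟨x', hx', rfl⟩ := (hmemF C).mp hC
    exact ⟨⟨x', mem_cls_self hx'⟩, cls_finite A'.rel s x'⟩
  have hcount : ∀ k : ℕ, 1 ≤ k →
      ((F.filter (fun C => (k : ℕ∞) ≤ C.encard)).card : ℕ∞) ≤
        {Y | Y ∈ {C : Set ℕ | ∃ x, C = S.classOf x} ∧ (k : ℕ∞) ≤ Y.encard}.encard := by
    intro k hk
    have hseteq : {C | C ∈ wcl A'.rel s ∧ (k : ℕ∞) ≤ C.encard} =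
        ((F.filter (fun C => (k : ℕ∞) ≤ C.encard)) : Set (Set ℕ)) := by
      ext C
      simp only [Finset.coe_filter, Set.mem_setOf_eq, hmemF]
    have h1 : ((F.filter (fun C => (k : ℕ∞) ≤ C.encard)).card : ℕ∞) = CGe A'.rel s k := by
      rw [CGe, hseteq, Set.encard_coe_eq_coe_finsetCard]
    rw [h1]
    refine le_trans (CGe_le_DD A' s k) (le_trans (hD k hk) ?_)
    rw [DD]
    apply Set.encard_le_encard
    rintro Y ⟨hY1, hY2⟩
    exact ⟨hY1, hY2⟩
  obtain ⟨g, hginj, hg⟩ := greedy_matching F.card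
    {C : Set ℕ | ∃ x, C = S.classOf x} F rfl hne hcount
  -- per-class injections
  have hjex : ∀ C : Set ℕ, ∃ j : ℕ → ℕ, C ∈ F → (Set.InjOn j C ∧ ∀ x ∈ C, j x ∈ g C) := by
    intro C
    by_cases hC : C ∈ F
    · obtain ⟨j, hj1, hj2⟩ := inj_of_encard_le (hne C hC).2 (hg C hC).2
      exact ⟨j, fun _ => ⟨hj1, hj2⟩⟩
    · exact ⟨id, fun hc => absurd hc hC⟩
  choose jf hjf using hjex
  refine ⟨fun x => if x < s then jf (cls A'.rel s x) x else x, ?_, ?_⟩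
  · -- injectivity on Iio s
    intro x hx y hy hxy
    simp only [Set.mem_Iio] at hx hy
    replace hxy : (if x < s then jf (cls A'.rel s x) x else x) =
        (if y < s then jf (cls A'.rel s y) y else y) := hxy
    rw [if_pos hx, if_pos hy] at hxy
    have hCx : cls A'.rel s x ∈ F := (hmemF _).mpr ⟨x, hx, rfl⟩
    have hCy : cls A'.rel s y ∈ F := (hmemF _).mpr ⟨y, hy, rfl⟩
    by_cases hCC : cls A'.rel s x = cls A'.rel s y
    · rw [hCC] at hxy
      exact (hjf _ hCy).1 (hCC ▸ mem_cls_self hx) (mem_cls_self hy) hxy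
    · exfalso
      have h1 : jf (cls A'.rel s x) x ∈ g (cls A'.rel s x) :=
        (hjf _ hCx).2 x (mem_cls_self hx)
      have h2 : jf (cls A'.rel s y) y ∈ g (cls A'.rel s y) :=
        (hjf _ hCy).2 y (mem_cls_self hy)
      rw [hxy] at h1
      obtain ⟨u, hu⟩ := (hg _ hCx).1
      obtain ⟨w, hw⟩ := (hg _ hCy).1
      have hgz : g (cls A'.rel s x) = g (cls A'.rel s y) := by
        rw [hu, hw]
        rw [hu] at h1; rw [hw] at h2
        rw [← classOf_eq_of_mem h1, ← classOf_eq_of_mem h2]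
      exact hCC (hginj (Finset.mem_coe.mpr hCx) (Finset.mem_coe.mpr hCy) hgz)
  · -- relation preservation
    intro x hx y hy
    show A'.rel x y ↔ S.rel (if x < s then jf (cls A'.rel s x) x else x)
      (if y < s then jf (cls A'.rel s y) y else y)
    rw [if_pos hx, if_pos hy]
    have hCx : cls A'.rel s x ∈ F := (hmemF _).mpr ⟨x, hx, rfl⟩
    have hCy : cls A'.rel s y ∈ F := (hmemF _).mpr ⟨y, hy, rfl⟩
    have h1 : jf (cls A'.rel s x) x ∈ g (cls A'.rel s x) :=
      (hjf _ hCx).2 x (mem_cls_self hx)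
    have h2 : jf (cls A'.rel s y) y ∈ g (cls A'.rel s y) :=
      (hjf _ hCy).2 y (mem_cls_self hy)
    constructor
    · intro hrel
      have hCC : cls A'.rel s x = cls A'.rel s y := cls_congr_of_rel hrel
      rw [← hCC]
      obtain ⟨u, hu⟩ := (hg _ hCx).1
      have h2' : jf (cls A'.rel s x) y ∈ g (cls A'.rel s x) :=
        (hjf _ hCx).2 y (by rw [hCC]; exact mem_cls_self hy)
      rw [hu] at h1 h2'
      exact rel_of_mem_classOf h1 h2'
    · intro hrel
      by_contra hnr
      have hCC : cls A'.rel s x ≠ cls A'.rel s y := by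
        intro heq
        have : y ∈ cls A'.rel s x := heq ▸ mem_cls_self hy
        exact hnr this.2
      obtain ⟨u, hu⟩ := (hg _ hCx).1
      obtain ⟨w, hw⟩ := (hg _ hCy).1
      have hgz : g (cls A'.rel s x) = g (cls A'.rel s y) := by
        rw [hu] at h1; rw [hw] at h2
        have e1 : S.classOf (jf (cls A'.rel s x) x) = S.classOf u := classOf_eq_of_mem h1
        have e2 : S.classOf (jf (cls A'.rel s y) y) = S.classOf w := classOf_eq_of_mem h2
        have e3 : S.classOf (jf (cls A'.rel s x) x) = S.classOf (jf (cls A'.rel s y) y) :=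
          classOf_eq_of_mem (show jf (cls A'.rel s x) x ∈
            S.classOf (jf (cls A'.rel s y) y) from S.equiv.symm hrel)
        rw [hu, hw, ← e1, ← e2, e3]
      exact hCC (hginj (Finset.mem_coe.mpr hCx) (Finset.mem_coe.mpr hCy) hgz)

/-! #### The learner -/

/-- Observed positive relation from a list of labelled pairs. -/
def Rof (σ : List ((ℕ × ℕ) × Bool)) : ℕ → ℕ → Prop :=
  fun x y => ((x, y), true) ∈ σ

/-- The decided window of `σ`. -/
def win (σ : List ((ℕ × ℕ) × Bool)) : ℕ :=
  Nat.findGreatest (fun m => ∀ x, x < m → ∀ y, y < m → ∃ b, ((x, y), b) ∈ σ) σ.length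

variable (Me : ℕ → EqStruct) (𝔄 : Set EqStruct)

/-- Indices of structures realized (up to isomorphism) in the family. -/
def EE : Set ℕ := {e | ∃ A ∈ 𝔄, (Me e).Isom A}

/-- The agreement condition of candidate `e` at confidence level `v` on data `σ`. -/
def Ac (e v : ℕ) (σ : List ((ℕ × ℕ) × Bool)) : Prop :=
  (∀ k : ℕ, CGe (Rof σ) (win σ) k ≤ DD (Me e) k) ∧
  (∀ k : ℕ, k ≤ v → min (DD (Me e) k) (v : ℕ∞) ≤ CGe (Rof σ) (win σ) k) ∧
  (∀ k : ℕ, CFin (Rof σ) (win σ) v k ≤ chi (Me e) k)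

lemma Ac_mono {e v v' : ℕ} {σ : List ((ℕ × ℕ) × Bool)} (hvv : v' ≤ v)
    (h : Ac Me e v σ) : Ac Me e v' σ := by
  obtain ⟨h1, h2, h3⟩ := h
  refine ⟨h1, fun k hk => ?_, fun k => ?_⟩
  · refine le_trans (min_le_min_left _ (by exact_mod_cast hvv)) (h2 k (hk.trans hvv))
  · refine le_trans (Set.encard_le_encard ?_) (h3 k)
    rintro C ⟨hC1, hC2, hC3⟩
    exact ⟨hC1, hC2.trans fun z hz => lt_of_lt_of_le hz hvv, hC3⟩

/-- The score of candidate `e` on data `σ`. -/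
def score (e : ℕ) (σ : List ((ℕ × ℕ) × Bool)) : ℕ :=
  if Ac Me e 0 σ then Nat.findGreatest (fun v => Ac Me e v σ) (win σ) + 1 else 0

lemma score_ge {e v : ℕ} {σ : List ((ℕ × ℕ) × Bool)} (h : Ac Me e v σ)
    (hv : v ≤ win σ) : v + 1 ≤ score Me e σ := by
  have h0 : Ac Me e 0 σ := Ac_mono Me (Nat.zero_le v) h
  rw [score, if_pos h0]
  have := Nat.le_findGreatest (P := fun v => Ac Me e v σ) hv h
  omega

lemma score_facts {e v : ℕ} {σ : List ((ℕ × ℕ) × Bool)} (h : v + 1 ≤ score Me e σ) :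
    Ac Me e v σ := by
  by_cases h0 : Ac Me e 0 σ
  · rw [score, if_pos h0] at h
    have hfg : Ac Me e (Nat.findGreatest (fun v => Ac Me e v σ) (win σ)) σ :=
      Nat.findGreatest_spec (P := fun v => Ac Me e v σ) (Nat.zero_le (win σ)) h0
    exact Ac_mono Me (by omega) hfg
  · rw [score, if_neg h0] at h; omega

lemma score_le {e : ℕ} {σ : List ((ℕ × ℕ) × Bool)} : score Me e σ ≤ win σ + 1 := by
  rw [score]
  split
  · have := @Nat.findGreatest_le (fun v => Ac Me e v σ) (fun _ => Classical.propDecidable _) (win σ)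
    omega
  · omega

lemma Ac_congr {e e' : ℕ} (h : (Me e).Isom (Me e')) (v : ℕ)
    (σ : List ((ℕ × ℕ) × Bool)) : Ac Me e v σ ↔ Ac Me e' v σ := by
  have hD : ∀ k, DD (Me e) k = DD (Me e') k := isom_DD_eq h
  have hc : ∀ k, chi (Me e) k = chi (Me e') k := isom_chi_eq h
  unfold Ac
  simp only [hD, hc]

lemma score_congr {e e' : ℕ} (h : (Me e).Isom (Me e')) (σ : List ((ℕ × ℕ) × Bool)) :
    score Me e σ = score Me e' σ := by
  have hfg : Nat.findGreatest (fun v => Ac Me e v σ) (win σ) =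
      Nat.findGreatest (fun v => Ac Me e' v σ) (win σ) :=
    findGreatest_congr (fun v => Ac_congr Me h v σ) _
  rw [score, score, hfg]
  exact if_congr (Ac_congr Me h 0 σ) rfl rfl

/-- The value of candidate `e`, handicapped by its index. -/
def val (e : ℕ) (σ : List ((ℕ × ℕ) × Bool)) : ℕ :=
  min (score Me e σ) (win σ + 1 - e)

/-- Candidates on data `σ`. -/
def cand (σ : List ((ℕ × ℕ) × Bool)) : Finset ℕ :=
  (Finset.range (win σ + 1)).filter (fun e => e ∈ EE Me 𝔄)

def best (σ : List ((ℕ × ℕ) × Bool)) : ℕ :=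
  (cand Me 𝔄 σ).sup (fun e => val Me e σ)

/-! #### Stream lemmas -/

lemma mem_seg {I : ℕ → (ℕ × ℕ) × Bool} {n : ℕ} {p : (ℕ × ℕ) × Bool} :
    p ∈ seg I n ↔ ∃ i < n, I i = p := by
  simp only [seg, List.mem_map, List.mem_range]

lemma win_prop (σ : List ((ℕ × ℕ) × Bool)) :
    ∀ x < win σ, ∀ y < win σ, ∃ b, ((x, y), b) ∈ σ := by
  have h0 : (fun m => ∀ x, x < m → ∀ y, y < m → ∃ b, ((x, y), b) ∈ σ) 0 := by
    intro x hx; omega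
  have := Nat.findGreatest_spec
    (P := fun m => ∀ x, x < m → ∀ y, y < m → ∃ b, ((x, y), b) ∈ σ)
    (Nat.zero_le σ.length) h0
  intro x hx y hy
  exact this x hx y hy

lemma label_true {B : EqStruct} {I : ℕ → (ℕ × ℕ) × Bool} (hI : IsInformant B I)
    {n x y : ℕ} {b : Bool} (hmem : ((x, y), b) ∈ seg I n) : b = true ↔ B.rel x y := by
  obtain ⟨i, _, hIi⟩ := mem_seg.mp hmem
  have h2 := hI.2 i
  rw [hIi] at h2
  simpa using h2

lemma Rof_window {B : EqStruct} {I : ℕ → (ℕ × ℕ) × Bool} (hI : IsInformant B I)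
    {n x y : ℕ} (hx : x < win (seg I n)) (hy : y < win (seg I n)) :
    Rof (seg I n) x y ↔ B.rel x y := by
  constructor
  · intro hmem
    exact (label_true hI hmem).mp rfl
  · intro hrel
    obtain ⟨b, hb⟩ := win_prop (seg I n) x hx y hy
    have hbt : b = true := (label_true hI hb).mpr hrel
    rw [hbt] at hb
    exact hb

lemma wcl_obs {B : EqStruct} {I : ℕ → (ℕ × ℕ) × Bool} (hI : IsInformant B I) (n : ℕ) :
    wcl (Rof (seg I n)) (win (seg I n)) = wcl B.rel (win (seg I n)) := by
  have hcls : ∀ x, x < win (seg I n) →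
      cls (Rof (seg I n)) (win (seg I n)) x = cls B.rel (win (seg I n)) x := by
    intro x hx
    ext y
    exact ⟨fun hy => ⟨hy.1, (Rof_window hI hx hy.1).mp hy.2⟩,
      fun hy => ⟨hy.1, (Rof_window hI hx hy.1).mpr hy.2⟩⟩
  ext C
  constructor
  · rintro ⟨x, hx, rfl⟩; exact ⟨x, hx, hcls x hx⟩
  · rintro ⟨x, hx, rfl⟩; exact ⟨x, hx, (hcls x hx).symm⟩

lemma CGe_obs {B : EqStruct} {I : ℕ → (ℕ × ℕ) × Bool} (hI : IsInformant B I) (n k : ℕ) :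
    CGe (Rof (seg I n)) (win (seg I n)) k = CGe B.rel (win (seg I n)) k := by
  rw [CGe, CGe, wcl_obs hI n]

lemma CFin_obs {B : EqStruct} {I : ℕ → (ℕ × ℕ) × Bool} (hI : IsInformant B I) (n v k : ℕ) :
    CFin (Rof (seg I n)) (win (seg I n)) v k = CFin B.rel (win (seg I n)) v k := by
  rw [CFin, CFin, wcl_obs hI n]

lemma win_tendsto {B : EqStruct} {I : ℕ → (ℕ × ℕ) × Bool} (hI : IsInformant B I) (m : ℕ) :
    ∃ N, ∀ n, N ≤ n → m ≤ win (seg I n) := by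
  choose idx hidx using hI.1
  refine ⟨m + ((Finset.range m ×ˢ Finset.range m).sup fun p => idx p) + 1, fun n hn => ?_⟩
  have hlen : (seg I n).length = n := by
    simp [seg]
  have hP : ∀ x, x < m → ∀ y, y < m → ∃ b, ((x, y), b) ∈ seg I n := by
    intro x hx y hy
    have hmem : (x, y) ∈ Finset.range m ×ˢ Finset.range m :=
      Finset.mem_product.mpr ⟨Finset.mem_range.mpr hx, Finset.mem_range.mpr hy⟩
    have hle : idx (x, y) ≤ (Finset.range m ×ˢ Finset.range m).sup fun p => idx p :=
      Finset.le_sup hmem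
    have hlt : idx (x, y) < n := by omega
    refine ⟨(I (idx (x, y))).2, mem_seg.mpr ⟨idx (x, y), hlt, ?_⟩⟩
    have h1 := hidx (x, y)
    exact Prod.ext h1 rfl
  have hmn : m ≤ n := by omega
  have := Nat.le_findGreatest
    (P := fun m => ∀ x, x < m → ∀ y, y < m → ∃ b, ((x, y), b) ∈ seg I n)
    (hlen ▸ hmn) hP
  exact this

/-- The learner. -/
def learner : Learner := fun σ =>
  if h : ∃ e, e ∈ cand Me 𝔄 σ ∧ val Me e σ = best Me 𝔄 σ then some (Nat.find h)
  else none

/-! #### Convergence of the learner on correct hypotheses -/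

lemma Tpass {Me : ℕ → EqStruct} {B : EqStruct} {I : ℕ → (ℕ × ℕ) × Bool}
    (hI : IsInformant B I) (hBfin : ∀ x, (B.classOf x).Finite) {e : ℕ}
    (hiso : (Me e).Isom B) (v : ℕ) :
    ∃ N, ∀ n, N ≤ n → v + 1 ≤ score Me e (seg I n) := by
  have hDDe : ∀ k, DD (Me e) k = DD B k := isom_DD_eq hiso
  have hchie : ∀ k, chi (Me e) k = chi B k := isom_chi_eq hiso
  obtain ⟨T, hvT, hT⟩ := Tv_exists B hBfin v
  have hW0ex : ∀ k : ℕ, ∃ W₀, ∀ W, W₀ ≤ W →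
      min (DD B k) (v : ℕ∞) ≤ CGe B.rel W k := by
    intro k
    have hne : min (DD B k) (v : ℕ∞) ≠ ⊤ :=
      ne_top_of_le_ne_top (by simp) (min_le_right _ _)
    have hcle : ((min (DD B k) (v : ℕ∞)).toNat : ℕ∞) = min (DD B k) (v : ℕ∞) :=
      ENat.coe_toNat hne
    obtain ⟨W₀, hW₀⟩ := DD_lower B k (min (DD B k) (v : ℕ∞)).toNat
      (le_trans (le_of_eq hcle) (min_le_left _ _))
    exact ⟨W₀, fun W hW => hcle ▸ hW₀ W hW⟩
  choose W0 hW0 using hW0ex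
  obtain ⟨N, hN⟩ := win_tendsto hI (max (max T v) ((Finset.range (v + 1)).sup W0))
  refine ⟨N, fun n hn => ?_⟩
  have hWn := hN n hn
  have hWT : T ≤ win (seg I n) := le_trans (le_trans (le_max_left _ _) (le_max_left _ _)) hWn
  have hWv : v ≤ win (seg I n) := le_trans (le_trans (le_max_right _ _) (le_max_left _ _)) hWn
  refine score_ge Me ⟨?_, ?_, ?_⟩ hWv
  · intro k
    rw [CGe_obs hI n k, hDDe k]
    exact CGe_le_DD B _ k
  · intro k hk
    rw [CGe_obs hI n k, hDDe k]
    refine hW0 k _ (le_trans ?_ hWn)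
    exact le_trans (Finset.le_sup (Finset.mem_range.mpr (by omega))) (le_max_right _ _)
  · intro k
    rw [CFin_obs hI n v k, CFin_eq_FB B hT hvT hWT k, hchie k]
    exact FB_le_chi B v k

/-! #### The extraction lemma: a candidate type that scores arbitrarily high is correct -/

lemma XL {Me : ℕ → EqStruct} {𝔄 : Set EqStruct}
    (hnoinf : ∀ A ∈ 𝔄, ∀ x, (A.classOf x).Finite) (h : FinitelySeparable 𝔄)
    {A B : EqStruct} {I : ℕ → (ℕ × ℕ) × Bool} (hA : A ∈ 𝔄) (hBA : B.Isom A)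
    (hI : IsInformant B I) (hBfin : ∀ x, (B.classOf x).Finite) (C : EqStruct)
    (hyp : ∀ V : ℕ, ∃ n e, e ∈ EE Me 𝔄 ∧ (Me e).Isom C ∧ V + 1 ≤ score Me e (seg I n)) :
    C.Isom B := by
  -- (f1) D_B ≤ D_C
  have f1 : ∀ k : ℕ, DD B k ≤ DD C k := by
    intro k
    apply enat_le_of_forall_nat_le
    intro c hc
    obtain ⟨W₀, hW₀⟩ := DD_lower B k c hc
    obtain ⟨n, e, _, heC, hsc⟩ := hyp W₀
    have hAc : Ac Me e W₀ (seg I n) := score_facts Me hsc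
    have hWn : W₀ ≤ win (seg I n) := by
      have := score_le Me (e := e) (σ := seg I n); omega
    calc (c : ℕ∞) ≤ CGe B.rel (win (seg I n)) k := hW₀ _ hWn
      _ = CGe (Rof (seg I n)) (win (seg I n)) k := (CGe_obs hI n k).symm
      _ ≤ DD (Me e) k := hAc.1 k
      _ = DD C k := isom_DD_eq heC k
  -- (f2) D_C ≤ D_B
  have f2 : ∀ k : ℕ, DD C k ≤ DD B k := by
    intro k
    by_contra hcon
    push_neg at hcon
    have hbne : DD B k ≠ ⊤ := (hcon.trans_le le_top).ne
    set d := (DD B k).toNat with hd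
    have hdc : (d : ℕ∞) = DD B k := ENat.coe_toNat hbne
    obtain ⟨n, e, _, heC, hsc⟩ := hyp (max k (d + 1))
    have hAc : Ac Me e (max k (d + 1)) (seg I n) := score_facts Me hsc
    have h2 := hAc.2.1 k (le_max_left _ _)
    rw [CGe_obs hI n k] at h2
    have hup : CGe B.rel (win (seg I n)) k ≤ DD B k := CGe_le_DD B _ k
    have hsucc : DD B k + 1 ≤ DD (Me e) k := by
      rw [isom_DD_eq heC k]
      exact (ENat.add_one_le_iff hbne).mpr hcon
    have hVb : DD B k + 1 ≤ ((max k (d + 1) : ℕ) : ℕ∞) := by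
      rw [← hdc]
      have : ((d : ℕ) + 1 : ℕ) ≤ max k (d + 1) := le_max_right _ _
      exact_mod_cast this
    have hmin : DD B k + 1 ≤ min (DD (Me e) k) ((max k (d + 1) : ℕ) : ℕ∞) :=
      le_min hsucc hVb
    have hfinal : DD B k + 1 ≤ DD B k := le_trans hmin (le_trans h2 hup)
    exact absurd ((ENat.add_one_le_iff hbne).mp hfinal) (lt_irrefl _)
  -- (f3) chi_B ≤ chi_C
  have f3 : ∀ k : ℕ, chi B k ≤ chi C k := by
    intro k
    apply enat_le_of_forall_nat_le
    intro c hc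
    obtain ⟨v, hv⟩ := FB_reaches B k c hc
    obtain ⟨T, hvT, hT⟩ := Tv_exists B hBfin v
    obtain ⟨n, e, _, heC, hsc⟩ := hyp (max v T)
    have hAc : Ac Me e v (seg I n) :=
      Ac_mono Me (le_max_left _ _) (score_facts Me hsc)
    have hWn : T ≤ win (seg I n) := by
      have := score_le Me (e := e) (σ := seg I n)
      have h2 : max v T ≤ win (seg I n) := by omega
      omega
    have h3 := hAc.2.2 k
    rw [CFin_obs hI n v k, CFin_eq_FB B hT hvT hWn k] at h3
    calc (c : ℕ∞) ≤ FB B v k := hv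
      _ ≤ chi (Me e) k := h3
      _ = chi C k := isom_chi_eq heC k
  -- realize C in the family
  obtain ⟨n, e, heE, heC, _⟩ := hyp 0
  obtain ⟨A', hA', heA'⟩ := heE
  have hCA' : C.Isom A' := isom_trans (isom_symm heC) heA'
  -- separability: A' must be isomorphic to A
  have hnotlim := h {A'} (by
    intro x hx
    rw [Set.mem_singleton_iff] at hx
    rw [hx]; exact hA') A hA
  have hA'A : A'.Isom A := by
    by_contra hn
    apply hnotlim
    left
    refine ⟨⟨{A'}, Set.finite_singleton A', fun B' hB' => ⟨A', rfl, ?_⟩⟩,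
      A', rfl, hn, ?_, ?_⟩
    · rw [Set.mem_singleton_iff] at hB'
      rw [hB']; exact isom_refl A'
    · -- A' finitely embeds into A
      apply finEmbeds_of_DD_le
      intro k _
      have e1 : DD A' k = DD C k := (isom_DD_eq hCA' k).symm
      have e2 : DD B k = DD A k := isom_DD_eq hBA k
      rw [e1, ← e2]
      exact f2 k
    · -- charOf A ⊆ charOf A'
      intro p hp
      have hp' : (p.2 : ℕ∞) ≤ A.numClasses p.1 := hp
      show (p.2 : ℕ∞) ≤ A'.numClasses p.1
      cases hp1 : p.1 with
      | top =>
          rw [hp1, numClasses_top_eq_zero (hnoinf A hA)] at hp'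
          have : (p.2 : ℕ∞) = 0 := le_antisymm hp' (zero_le)
          rw [this]
          exact zero_le
      | coe k =>
          rw [hp1] at hp'
          have e1 : A.numClasses (k : ℕ∞) = chi B k := (isom_chi_eq hBA k).symm
          have e2 : chi C k = chi A' k := isom_chi_eq hCA' k
          calc (p.2 : ℕ∞) ≤ chi B k := e1 ▸ hp'
            _ ≤ chi C k := f3 k
            _ = A'.numClasses (k : ℕ∞) := e2
  exact isom_trans hCA' (isom_trans hA'A (isom_symm hBA))

/-! #### The master convergence theorem -/

theorem learns (Me : ℕ → EqStruct) (𝔄 : Set EqStruct)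
    (hnoinf : ∀ A ∈ 𝔄, ∀ x, (A.classOf x).Finite)
    (hMe : ∀ A ∈ 𝔄, ∃ e, (Me e).Isom A)
    (h : FinitelySeparable 𝔄) :
    ∀ A ∈ 𝔄, InfExLearns Me EqStruct.Isom (learner Me 𝔄) A := by
  intro A hA B hBA I hI
  have hBfin : ∀ x, (B.classOf x).Finite := isom_finClasses hBA (hnoinf A hA)
  have hcor : ∃ e, (Me e).Isom B := by
    obtain ⟨e, he⟩ := hMe A hA
    exact ⟨e, isom_trans he (isom_symm hBA)⟩
  set e₀ := Nat.find hcor with he₀def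
  have he₀ : (Me e₀).Isom B := Nat.find_spec hcor
  have he₀E : e₀ ∈ EE Me 𝔄 := ⟨A, hA, isom_trans he₀ hBA⟩
  refine ⟨e₀, he₀, ?_⟩
  by_contra hfail
  push_neg at hfail
  -- arbitrarily high-scoring incorrect candidates must exist
  have hQ : ∀ V : ℕ, ∃ n e, e ∈ EE Me 𝔄 ∧ ¬ (Me e).Isom B ∧
      V + 1 ≤ score Me e (seg I n) := by
    intro V
    obtain ⟨N₁, hN₁⟩ := Tpass hI hBfin he₀ (V + 1)
    obtain ⟨N₂, hN₂⟩ := win_tendsto hI (e₀ + V + 1)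
    obtain ⟨n, hn, hne⟩ := hfail (max N₁ N₂)
    have hWn : e₀ + V + 1 ≤ win (seg I n) := hN₂ n (le_trans (le_max_right _ _) hn)
    have hsc₀ : V + 2 ≤ score Me e₀ (seg I n) := hN₁ n (le_trans (le_max_left _ _) hn)
    have hval₀ : V + 1 ≤ val Me e₀ (seg I n) := by
      rw [val]; omega
    have he₀cand : e₀ ∈ cand Me 𝔄 (seg I n) :=
      Finset.mem_filter.mpr ⟨Finset.mem_range.mpr (by omega), he₀E⟩
    have hex : ∃ e, e ∈ cand Me 𝔄 (seg I n) ∧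
        val Me e (seg I n) = best Me 𝔄 (seg I n) := by
      obtain ⟨w, hw, hsup⟩ := Finset.exists_mem_eq_sup (cand Me 𝔄 (seg I n))
        ⟨e₀, he₀cand⟩ (fun e => val Me e (seg I n))
      exact ⟨w, hw, by rw [best]; exact hsup.symm⟩
    have hlrn : learner Me 𝔄 (seg I n) = some (Nat.find hex) := dif_pos hex
    obtain ⟨hwcand, hwval⟩ := Nat.find_spec hex
    have hbestge : val Me e₀ (seg I n) ≤ best Me 𝔄 (seg I n) :=
      Finset.le_sup (f := fun e => val Me e (seg I n)) he₀cand
    have hwne : Nat.find hex ≠ e₀ := fun heq => hne (by rw [hlrn, heq])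
    have hwE : Nat.find hex ∈ EE Me 𝔄 := (Finset.mem_filter.mp hwcand).2
    have hbad : ¬ (Me (Nat.find hex)).Isom B := by
      intro hiso
      have hwge : e₀ ≤ Nat.find hex := Nat.find_min' hcor hiso
      have hsc : score Me (Nat.find hex) (seg I n) = score Me e₀ (seg I n) :=
        score_congr Me (isom_trans hiso (isom_symm he₀)) (seg I n)
      have hvw : val Me (Nat.find hex) (seg I n) ≤ val Me e₀ (seg I n) := by
        rw [val, val, hsc]; omega
      have hbeq : val Me e₀ (seg I n) = best Me 𝔄 (seg I n) :=
        le_antisymm hbestge (hwval ▸ hvw)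
      exact Nat.find_min hex (lt_of_le_of_ne hwge (Ne.symm hwne)) ⟨he₀cand, hbeq⟩
    refine ⟨n, Nat.find hex, hwE, hbad, ?_⟩
    have h1 : V + 1 ≤ val Me (Nat.find hex) (seg I n) := by
      rw [hwval]; exact le_trans hval₀ hbestge
    rw [val] at h1
    omega
  choose nn ee hQ1 hQ2 hQ3 using hQ
  have hAAex : ∀ V, ∃ A', A' ∈ 𝔄 ∧ (Me (ee V)).Isom A' := fun V => by
    obtain ⟨A', hA', hiso⟩ := hQ1 V
    exact ⟨A', hA', hiso⟩
  choose AA hAA hAAiso using hAAex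
  -- pigeonhole: no finite set of types covers the chosen candidates cofinally
  have hPH : ∀ T : Set EqStruct, T.Finite → ∀ V₀ : ℕ,
      ¬ (∀ V, V₀ ≤ V → ∃ C ∈ T, (AA V).Isom C) := by
    intro T hT V₀ hcov
    have hcof : ∃ C ∈ T, ∀ V, ∃ V', V ≤ V' ∧ V₀ ≤ V' ∧ (AA V').Isom C := by
      by_contra hnc
      push_neg at hnc
      have hch : ∀ C : EqStruct, ∃ V : ℕ, C ∈ T →
          ∀ V', V ≤ V' → V₀ ≤ V' → ¬ (AA V').Isom C := by
        intro C
        by_cases hC : C ∈ T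
        · obtain ⟨V, hV⟩ := hnc C hC
          exact ⟨V, fun _ => hV⟩
        · exact ⟨0, fun hc => absurd hc hC⟩
      choose bf hbf using hch
      obtain ⟨C, hCT, hiso⟩ := hcov (max V₀ (hT.toFinset.sup bf)) (le_max_left _ _)
      refine hbf C hCT (max V₀ (hT.toFinset.sup bf)) ?_ (le_max_left _ _) hiso
      exact le_trans (Finset.le_sup (hT.mem_toFinset.mpr hCT)) (le_max_right _ _)
    obtain ⟨C, hCT, hCcof⟩ := hcof
    have hCB : C.Isom B := by
      refine XL (Me := Me) hnoinf h hA hBA hI hBfin C (fun V => ?_)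
      obtain ⟨V', hVV', hV₀, hiso⟩ := hCcof V
      refine ⟨nn V', ee V', hQ1 V', isom_trans (hAAiso V') hiso, ?_⟩
      have := hQ3 V'
      omega
    obtain ⟨V', _, _, hiso⟩ := hCcof 0
    exact hQ2 V' (isom_trans (isom_trans (hAAiso V') hiso) hCB)
  -- eventually the selected candidates finitely embed into B
  have hFE : ∃ VF : ℕ, ∀ V, VF ≤ V → ∀ k, 1 ≤ k → DD (Me (ee V)) k ≤ DD B k := by
    by_cases htop : ∀ k : ℕ, 1 ≤ k → DD B k = ⊤
    · exact ⟨0, fun V _ k hk => (htop k hk) ▸ le_top⟩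
    · push_neg at htop
      have hex : ∃ k, 1 ≤ k ∧ DD B k ≠ ⊤ := htop
      obtain ⟨hk₀1, hk₀top⟩ := Nat.find_spec hex
      have hk₀min : ∀ k, k < Nat.find hex → 1 ≤ k → DD B k = ⊤ := by
        intro k hk h1k
        by_contra hne
        exact absurd ⟨h1k, hne⟩ (Nat.find_min hex hk)
      obtain ⟨K, hk₀K, hK⟩ := sizes_bounded B hBfin hk₀top
      have hdc : (((DD B (Nat.find hex)).toNat : ℕ) : ℕ∞) = DD B (Nat.find hex) :=
        ENat.coe_toNat hk₀top
      have hdk : ∀ k, Nat.find hex ≤ k →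
          DD B k ≤ (((DD B (Nat.find hex)).toNat : ℕ) : ℕ∞) := fun k hk =>
        le_trans (DD_antitone B hk) (le_of_eq hdc.symm)
      refine ⟨K + (DD B (Nat.find hex)).toNat + 2, fun V hV => ?_⟩
      have hAcV : Ac Me (ee V) V (seg I (nn V)) := score_facts Me (hQ3 V)
      have hmid : ∀ k, Nat.find hex ≤ k → k ≤ K + 1 → DD (Me (ee V)) k ≤ DD B k := by
        intro k hklo hkhi
        by_contra hcon
        push_neg at hcon
        have hbne : DD B k ≠ ⊤ :=
          ne_top_of_le_ne_top (by simp) (hdk k hklo)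
        have h2 := hAcV.2.1 k (by omega)
        rw [CGe_obs hI (nn V) k] at h2
        have hup : CGe B.rel (win (seg I (nn V))) k ≤ DD B k := CGe_le_DD B _ k
        have hsucc : DD B k + 1 ≤ DD (Me (ee V)) k := (ENat.add_one_le_iff hbne).mpr hcon
        have hVb : DD B k + 1 ≤ (V : ℕ∞) := by
          calc DD B k + 1 ≤ (((DD B (Nat.find hex)).toNat : ℕ) : ℕ∞) + 1 :=
                add_le_add_left (hdk k hklo) 1
            _ = (((DD B (Nat.find hex)).toNat + 1 : ℕ) : ℕ∞) := by push_cast; ring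
            _ ≤ (V : ℕ∞) := by exact_mod_cast (by omega : (DD B (Nat.find hex)).toNat + 1 ≤ V)
        have hfinal : DD B k + 1 ≤ DD B k :=
          le_trans (le_min hsucc hVb) (le_trans h2 hup)
        exact absurd ((ENat.add_one_le_iff hbne).mp hfinal) (lt_irrefl _)
      intro k hk1
      rcases lt_or_ge k (Nat.find hex) with hlt | hge
      · rw [hk₀min k hlt hk1]; exact le_top
      · rcases le_or_gt k (K + 1) with hle | hgt
        · exact hmid k hge hle
        · have h1 : DD (Me (ee V)) k ≤ DD (Me (ee V)) (K + 1) :=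
            DD_antitone _ (by omega)
          have h2 : DD (Me (ee V)) (K + 1) ≤ DD B (K + 1) := hmid (K + 1) (by omega) le_rfl
          have h3 : DD B (K + 1) = 0 := hK (K + 1) (by omega)
          calc DD (Me (ee V)) k ≤ 0 := h3 ▸ le_trans h1 h2
            _ ≤ DD B k := zero_le
  obtain ⟨VF, hVF⟩ := hFE
  -- the selected candidates eventually have all the classes of B
  have hCH : ∀ k c : ℕ, (c : ℕ∞) ≤ chi B k →
      ∃ Vp, ∀ V, Vp ≤ V → (c : ℕ∞) ≤ chi (Me (ee V)) k := by
    intro k c hc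
    obtain ⟨v, hv⟩ := FB_reaches B k c hc
    obtain ⟨T, hvT, hT⟩ := Tv_exists B hBfin v
    refine ⟨max v T, fun V hV => ?_⟩
    have hAc : Ac Me (ee V) v (seg I (nn V)) :=
      Ac_mono Me (le_trans (le_max_left _ _) hV) (score_facts Me (hQ3 V))
    have hWn : T ≤ win (seg I (nn V)) := by
      have hs := score_le Me (e := ee V) (σ := seg I (nn V))
      have h3 := hQ3 V
      omega
    have h3 := hAc.2.2 k
    rw [CFin_obs hI (nn V) v k, CFin_eq_FB B hT hvT hWn k] at h3
    exact le_trans hv h3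
  -- the limit family
  apply h {S' | ∃ V, VF ≤ V ∧ S' = AA V} (by rintro S' ⟨V, _, rfl⟩; exact hAA V) A hA
  have hnft : ¬ FinTypes {S' | ∃ V, VF ≤ V ∧ S' = AA V} := by
    rintro ⟨T, hTfin, hcov⟩
    exact hPH T hTfin VF (fun V hV => hcov (AA V) ⟨V, hV, rfl⟩)
  right
  refine ⟨hnft, ?_, ?_⟩
  · rintro A'' ⟨V, hV, rfl⟩
    constructor
    · intro hiso
      exact hQ2 V (isom_trans (isom_trans (hAAiso V) hiso) (isom_symm hBA))
    · apply finEmbeds_of_DD_le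
      intro k hk
      calc DD (AA V) k = DD (Me (ee V)) k := (isom_DD_eq (hAAiso V) k).symm
        _ ≤ DD B k := hVF V hV k hk
        _ = DD A k := isom_DD_eq hBA k
  · intro p hp
    have hp' : (p.2 : ℕ∞) ≤ A.numClasses p.1 := hp
    show ¬ FinTypes {B' | B' ∈ {S' | ∃ V, VF ≤ V ∧ S' = AA V} ∧ p ∈ charOf B'}
    by_cases hc0 : p.2 = 0
    · have hseteq : {B' | B' ∈ {S' | ∃ V, VF ≤ V ∧ S' = AA V} ∧ p ∈ charOf B'} =
          {S' | ∃ V, VF ≤ V ∧ S' = AA V} := by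
        ext B'
        simp only [Set.mem_setOf_eq, and_iff_left_iff_imp]
        intro _
        show (p.2 : ℕ∞) ≤ B'.numClasses p.1
        rw [hc0]
        simp
      rw [hseteq]; exact hnft
    · obtain ⟨k, hk⟩ : ∃ k : ℕ, p.1 = (k : ℕ∞) := by
        cases hp1 : p.1 with
        | top =>
            rw [hp1, numClasses_top_eq_zero (hnoinf A hA)] at hp'
            exact absurd (by exact_mod_cast le_antisymm hp' (zero_le)) hc0
        | coe k => exact ⟨k, rfl⟩
      have hcchi : (p.2 : ℕ∞) ≤ chi B k := by
        rw [hk] at hp'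
        calc (p.2 : ℕ∞) ≤ A.numClasses (k : ℕ∞) := hp'
          _ = chi B k := (isom_chi_eq hBA k).symm
      obtain ⟨Vp, hVp⟩ := hCH k p.2 hcchi
      rintro ⟨T, hTfin, hcov⟩
      apply hPH T hTfin (max VF Vp)
      intro V hV
      apply hcov
      refine ⟨⟨V, le_trans (le_max_left _ _) hV, rfl⟩, ?_⟩
      show (p.2 : ℕ∞) ≤ (AA V).numClasses p.1
      rw [hk]
      calc (p.2 : ℕ∞) ≤ chi (Me (ee V)) k := hVp V (le_trans (le_max_right _ _) hV)
        _ = (AA V).numClasses (k : ℕ∞) := isom_chi_eq (hAAiso V) k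

end

end S12


/-- characterization, hard direction: a finitely separable family of
equivalence structures with no infinite classes is InfEx-learnable up to isomorphism. -/
theorem stmt12 (Me : ℕ → EqStruct) (𝔄 : Set EqStruct)
    (hnoinf : ∀ A ∈ 𝔄, ∀ x, (A.classOf x).Finite)
    (hMe : ∀ A ∈ 𝔄, ∃ e, (Me e).Isom A)
    (h : FinitelySeparable 𝔄) :
    ∃ M : Learner, ∀ A ∈ 𝔄, InfExLearns Me EqStruct.Isom M A :=
  ⟨S12.learner Me 𝔄, S12.learns Me 𝔄 hnoinf hMe h⟩
end

section
/- If 𝔄 is a family of equivalence structures with no infinite classes and 𝔄 has only finitely many isomorphism types, then 𝔄 is InfEx_≅-learnable if and only if every two-element subfamily {A, B} ⊆ 𝔄 is InfEx_≅-learnable. -/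
open Set

/-- A trivial default equivalence structure. -/
def trivStruct : EqStruct :=
  ⟨fun _ _ => True, ⟨fun _ => trivial, fun h => h, fun h _ => h⟩⟩

lemma EqStruct.isom_refl (A : EqStruct) : A.Isom A :=
  ⟨id, Function.bijective_id, fun _ _ => Iff.rfl⟩

lemma EqStruct.isom_symm {A B : EqStruct} (h : A.Isom B) : B.Isom A := by
  obtain ⟨f, hf, hrel⟩ := h
  obtain ⟨g, hgf, hfg⟩ := Function.bijective_iff_has_inverse.mp hf
  refine ⟨g, Function.bijective_iff_has_inverse.mpr ⟨f, hfg, hgf⟩, fun x y => ?_⟩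
  rw [hrel (g x) (g y), hfg x, hfg y]

lemma EqStruct.isom_trans {A B C : EqStruct} (h1 : A.Isom B) (h2 : B.Isom C) : A.Isom C := by
  obtain ⟨f, hf, hrf⟩ := h1
  obtain ⟨g, hg, hrg⟩ := h2
  exact ⟨g ∘ f, hg.comp hf, fun x y => (hrf x y).trans (hrg (f x) (f y))⟩

lemma existsInformant (A : EqStruct) : ∃ I, IsInformant A I := by
  classical
  refine ⟨fun m => ((m.unpair.1, m.unpair.2), decide (A.rel m.unpair.1 m.unpair.2)),
    fun p => ?_, fun m => ?_⟩
  · exact ⟨Nat.pair p.1 p.2, by simp [Nat.unpair_pair]⟩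
  · simp

lemma learns_of_isom {Me : ℕ → EqStruct} {M : Learner} {X Y : EqStruct}
    (hXY : X.Isom Y) (h : InfExLearns Me EqStruct.Isom M Y) :
    InfExLearns Me EqStruct.Isom M X :=
  fun B hB I hI => h B (EqStruct.isom_trans hB hXY) I hI

lemma evAll (P : ℕ → ℕ → Prop) :
    ∀ n, (∀ i < n, ∃ N, ∀ m ≥ N, P i m) → ∃ N, ∀ m ≥ N, ∀ i < n, P i m := by
  intro n
  induction n with
  | zero => exact fun _ => ⟨0, fun m _ i hi => absurd hi (Nat.not_lt_zero i)⟩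
  | succ k ih =>
    intro h
    obtain ⟨N1, hN1⟩ := ih (fun i hi => h i (hi.trans (Nat.lt_succ_self k)))
    obtain ⟨N2, hN2⟩ := h k (Nat.lt_succ_self k)
    refine ⟨max N1 N2, fun m hm i hi => ?_⟩
    rcases Nat.lt_succ_iff_lt_or_eq.mp hi with h' | h'
    · exact hN1 m (le_trans (le_max_left _ _) hm) i h'
    · subst h'; exact hN2 m (le_trans (le_max_right _ _) hm)

lemma key (Me : ℕ → EqStruct) (n : ℕ) (A : ℕ → EqStruct)
    (Mp : ℕ → ℕ → Learner)
    (hMp : ∀ i < n, ∀ j < n,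
      InfExLearns Me EqStruct.Isom (Mp i j) (A i) ∧
      InfExLearns Me EqStruct.Isom (Mp i j) (A j)) :
    ∃ M : Learner, ∀ i < n, InfExLearns Me EqStruct.Isom M (A i) := by
  classical
  have hE : ∀ i, i < n → ∃ e, (Me e).Isom (A i) := by
    intro i hi
    obtain ⟨I, hI⟩ := existsInformant (A i)
    obtain ⟨e, he, _⟩ := (hMp i hi i hi).1 (A i) (EqStruct.isom_refl _) I hI
    exact ⟨e, he⟩
  set E : ℕ → ℕ := fun i => if h : ∃ e, (Me e).Isom (A i) then h.choose else 0 with hEdef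
  have hEspec : ∀ i < n, (Me (E i)).Isom (A i) := by
    intro i hi
    have h := hE i hi
    simp only [hEdef, dif_pos h]
    exact h.choose_spec
  set cond : ℕ → List ((ℕ × ℕ) × Bool) → Prop :=
    fun i σ => ∀ j < n, j ≠ i → ∃ e, Mp i j σ = some e ∧ (Me e).Isom (A i) with hconddef
  refine ⟨fun σ => if h : ∃ i, i < n ∧ cond i σ then some (E (Nat.find h)) else none, ?_⟩
  intro i0 hi0 B hB I hI
  have hex : ∃ k, k < n ∧ (A k).Isom B := ⟨i0, hi0, EqStruct.isom_symm hB⟩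
  have hk0 := Nat.find_spec hex
  set k0 := Nat.find hex with hk0def
  refine ⟨E k0, EqStruct.isom_trans (hEspec k0 hk0.1) hk0.2, ?_⟩
  have hP : ∀ i < n, ∃ N, ∀ m ≥ N, (cond i (seg I m) ↔ (A i).Isom B) := by
    intro i hi
    by_cases hiso : (A i).Isom B
    · have h1 : ∀ j < n, ∃ N, ∀ m ≥ N,
          ∃ e, Mp i j (seg I m) = some e ∧ (Me e).Isom (A i) := by
        intro j hj
        obtain ⟨e, he, N, hN⟩ := (hMp i hi j hj).1 B (EqStruct.isom_symm hiso) I hI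
        exact ⟨N, fun m hm => ⟨e, hN m hm, EqStruct.isom_trans he (EqStruct.isom_symm hiso)⟩⟩
      obtain ⟨N, hN⟩ := evAll _ n h1
      exact ⟨N, fun m hm => iff_of_true (fun j hj _ => hN m hm j hj) hiso⟩
    · have hne : k0 ≠ i := fun h => hiso (h ▸ hk0.2)
      obtain ⟨e, he, N, hN⟩ := (hMp i hi k0 hk0.1).2 B (EqStruct.isom_symm hk0.2) I hI
      refine ⟨N, fun m hm => iff_of_false (fun hc => ?_) hiso⟩
      obtain ⟨e', he', hiso'⟩ := hc k0 hk0.1 hne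
      rw [hN m hm] at he'
      cases he'
      exact hiso (EqStruct.isom_trans (EqStruct.isom_symm hiso') he)
  obtain ⟨N, hN⟩ := evAll _ n hP
  refine ⟨N, fun m hm => ?_⟩
  have hcons : ∃ i, i < n ∧ cond i (seg I m) :=
    ⟨k0, hk0.1, (hN m hm k0 hk0.1).mpr hk0.2⟩
  show (if h : ∃ i, i < n ∧ cond i (seg I m) then some (E (Nat.find h)) else none)
      = some (E k0)
  rw [dif_pos hcons]
  have h1 : Nat.find hcons ≤ k0 := Nat.find_min' hcons ⟨hk0.1, (hN m hm k0 hk0.1).mpr hk0.2⟩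
  have hfs := Nat.find_spec hcons
  have h2 : k0 ≤ Nat.find hcons :=
    Nat.find_min' hex ⟨hfs.1, (hN m hm _ hfs.1).mp hfs.2⟩
  rw [le_antisymm h1 h2]

/-- for a family with no infinite classes and finitely many isomorphism
types, learnability is equivalent to pairwise learnability. -/
theorem stmt13 (Me : ℕ → EqStruct) (𝔄 : Set EqStruct)
    (hnoinf : ∀ A ∈ 𝔄, ∀ x, (A.classOf x).Finite)
    (hfin : ∃ T : Set EqStruct, T.Finite ∧ ∀ A ∈ 𝔄, ∃ C ∈ T, A.Isom C) :
    (∃ M : Learner, ∀ A ∈ 𝔄, InfExLearns Me EqStruct.Isom M A) ↔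
      (∀ A ∈ 𝔄, ∀ B ∈ 𝔄, ∃ M : Learner,
        InfExLearns Me EqStruct.Isom M A ∧ InfExLearns Me EqStruct.Isom M B) := by
  constructor
  · rintro ⟨M, hM⟩ A hA B hB
    exact ⟨M, hM A hA, hM B hB⟩
  · intro hpair
    classical
    obtain ⟨T, hTfin, hT⟩ := hfin
    set g : EqStruct → EqStruct := fun C =>
      if h : ∃ A ∈ 𝔄, A.Isom C then h.choose else C with hgdef
    set S : Set EqStruct := g '' (T ∩ {C | ∃ A ∈ 𝔄, A.Isom C}) with hSdef
    have hSfin : S.Finite := (hTfin.inter_of_left _).image g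
    have hSsub : S ⊆ 𝔄 := by
      rintro _ ⟨C, ⟨_, hC⟩, rfl⟩
      have hC' : ∃ A ∈ 𝔄, A.Isom C := hC
      simp only [hgdef, dif_pos hC']
      exact hC'.choose_spec.1
    have hScov : ∀ X ∈ 𝔄, ∃ Y ∈ S, X.Isom Y := by
      intro X hX
      obtain ⟨C, hCT, hXC⟩ := hT X hX
      have hC : ∃ A ∈ 𝔄, A.Isom C := ⟨X, hX, hXC⟩
      refine ⟨g C, ⟨C, ⟨hCT, hC⟩, rfl⟩, ?_⟩
      have hgC : (g C).Isom C := by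
        simp only [hgdef, dif_pos hC]; exact hC.choose_spec.2
      exact EqStruct.isom_trans hXC (EqStruct.isom_symm hgC)
    set L : List EqStruct := hSfin.toFinset.toList with hLdef
    have hLmem : ∀ X, X ∈ L ↔ X ∈ S := by
      intro X; rw [hLdef, Finset.mem_toList, Set.Finite.mem_toFinset]
    set n := L.length with hndef
    set A : ℕ → EqStruct := fun i => L.getD i trivStruct with hAdef
    have hAget : ∀ i, ∀ h : i < n, A i = L[i] := by
      intro i hi
      simp only [hAdef]
      exact List.getD_eq_getElem L _ hi
    have hAmem : ∀ i < n, A i ∈ 𝔄 := by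
      intro i hi
      have : A i ∈ L := by
        rw [hAget i hi]
        exact List.getElem_mem _
      exact hSsub ((hLmem _).mp this)
    set Mp : ℕ → ℕ → Learner := fun i j =>
      if h : A i ∈ 𝔄 ∧ A j ∈ 𝔄 then (hpair (A i) h.1 (A j) h.2).choose
      else fun _ => none with hMpdef
    have hMp : ∀ i < n, ∀ j < n,
        InfExLearns Me EqStruct.Isom (Mp i j) (A i) ∧
        InfExLearns Me EqStruct.Isom (Mp i j) (A j) := by
      intro i hi j hj
      have h : A i ∈ 𝔄 ∧ A j ∈ 𝔄 := ⟨hAmem i hi, hAmem j hj⟩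
      simp only [hMpdef, dif_pos h]
      exact (hpair (A i) h.1 (A j) h.2).choose_spec
    obtain ⟨M, hM⟩ := key Me n A Mp hMp
    refine ⟨M, fun X hX => ?_⟩
    obtain ⟨Y, hYS, hXY⟩ := hScov X hX
    obtain ⟨i, hi, hYi⟩ := List.mem_iff_getElem.mp ((hLmem Y).mpr hYS)
    have hXA : X.Isom (A i) := by rw [hAget i hi, hYi]; exact hXY
    exact learns_of_isom hXA (hM i hi)
end

section
/- The family {[5:n, 1:ω] : n ∈ ω} ∪ {[5:ω]} — where [5:n,1:ω] has exactly n classes of size 5 plus infinitely many singleton classes, and [5:ω] has infinitely many classes of size 5 and nothing else — is not InfEx_≅-learnable. -/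
open Set

lemma equiv_of_encard_eq {s t : Set ℕ} (h : s.encard = t.encard) : Nonempty (s ≃ t) := by
  by_cases hs : s.Finite
  · have ht : t.Finite := by
      by_contra hinf
      rw [Set.encard_eq_top hinf] at h
      exact hs.encard_lt_top.ne h
    have hc : hs.toFinset.card = ht.toFinset.card := by
      have h2 := h
      rw [Set.Finite.encard_eq_coe_toFinset_card hs,
        Set.Finite.encard_eq_coe_toFinset_card ht] at h2
      exact_mod_cast h2
    refine ⟨(Equiv.setCongr ?_).trans ((Finset.equivOfCardEq hc).trans (Equiv.setCongr ?_))⟩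
    · exact (Set.Finite.coe_toFinset hs).symm
    · exact Set.Finite.coe_toFinset ht
  · have ht : ¬ t.Finite := by
      intro htf
      rw [Set.encard_eq_top hs] at h
      exact htf.encard_lt_top.ne h.symm
    have h1 : Nonempty (Denumerable s) := by
      rw [nonempty_denumerable_iff]
      exact ⟨Set.Countable.to_subtype (Set.to_countable s), Set.infinite_coe_iff.mpr hs⟩
    have h2 : Nonempty (Denumerable t) := by
      rw [nonempty_denumerable_iff]
      exact ⟨Set.Countable.to_subtype (Set.to_countable t), Set.infinite_coe_iff.mpr ht⟩
    obtain ⟨d1⟩ := h1; obtain ⟨d2⟩ := h2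
    exact ⟨(@Denumerable.eqv s d1).trans (@Denumerable.eqv t d2).symm⟩

def Fib (u : ℕ → ℕ) (i : ℕ) : Set ℕ := {x | u x = i}

lemma mem_Fib {u : ℕ → ℕ} {i x : ℕ} : x ∈ Fib u i ↔ u x = i := Iff.rfl

/-- least representative -/
noncomputable def qrep (X : EqStruct) (x : ℕ) : ℕ :=
  @Nat.find (fun y => X.rel x y) (Classical.decPred _) ⟨x, X.equiv.refl x⟩

lemma qrep_rel (X : EqStruct) (x : ℕ) : X.rel x (qrep X x) :=
  @Nat.find_spec (fun y => X.rel x y) (Classical.decPred _) ⟨x, X.equiv.refl x⟩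

lemma qrep_le {X : EqStruct} {x m : ℕ} (h : X.rel x m) : qrep X x ≤ m :=
  @Nat.find_min' (fun y => X.rel x y) (Classical.decPred _) ⟨x, X.equiv.refl x⟩ m h

lemma qrep_min {X : EqStruct} {x m : ℕ} (h : m < qrep X x) : ¬ X.rel x m :=
  @Nat.find_min (fun y => X.rel x y) (Classical.decPred _) ⟨x, X.equiv.refl x⟩ m h

lemma qrep_eq_iff (X : EqStruct) (x y : ℕ) : qrep X x = qrep X y ↔ X.rel x y := by
  constructor
  · intro h
    exact X.equiv.trans (qrep_rel X x) (h ▸ X.equiv.symm (qrep_rel X y))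
  · intro h
    apply le_antisymm
    · exact qrep_le (X.equiv.trans h (qrep_rel X y))
    · exact qrep_le (X.equiv.trans (X.equiv.symm h) (qrep_rel X x))

lemma qrep_idem (X : EqStruct) (x : ℕ) : qrep X (qrep X x) = qrep X x :=
  (qrep_eq_iff X _ _).mpr (X.equiv.symm (qrep_rel X x))

/-- fibers of qrep over a representative -/
lemma fib_qrep_rep {X : EqStruct} {r : ℕ} (h : qrep X r = r) :
    Fib (qrep X) r = X.classOf r := by
  ext x
  simp only [mem_Fib, EqStruct.classOf, Set.mem_setOf_eq]
  constructor
  · intro hx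
    exact X.equiv.symm ((qrep_eq_iff X x r).mp (hx.trans h.symm))
  · intro hx
    exact ((qrep_eq_iff X x r).mpr (X.equiv.symm hx)).trans h

lemma fib_qrep_nonrep {X : EqStruct} {r : ℕ} (h : qrep X r ≠ r) :
    Fib (qrep X) r = ∅ := by
  ext x
  simp only [mem_Fib, Set.mem_empty_iff_false, iff_false]
  intro hx
  exact h (by rw [← hx, qrep_idem, hx])

lemma classOf_eq_of_rel {X : EqStruct} {x y : ℕ} (h : X.rel x y) :
    X.classOf x = X.classOf y := by
  ext z
  exact ⟨fun hz => X.equiv.trans (X.equiv.symm h) hz, fun hz => X.equiv.trans h hz⟩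

lemma count_qfib (Y : EqStruct) (κ : ℕ∞) (hκ : κ ≠ 0) :
    {j | (Fib (qrep Y) j).encard = κ}.encard = Y.numClasses κ := by
  have hset : {j | (Fib (qrep Y) j).encard = κ}
      = {r | qrep Y r = r ∧ (Y.classOf r).encard = κ} := by
    ext j
    simp only [Set.mem_setOf_eq]
    by_cases hj : qrep Y j = j
    · rw [fib_qrep_rep hj]
      exact ⟨fun h => ⟨hj, h⟩, fun h => h.2⟩
    · rw [fib_qrep_nonrep hj]
      simp only [Set.encard_empty]
      exact ⟨fun h => absurd h.symm hκ, fun h => absurd h.1 hj⟩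
  rw [hset]
  have himg : Y.classOf '' {r | qrep Y r = r ∧ (Y.classOf r).encard = κ}
      = {C : Set ℕ | (∃ x, C = Y.classOf x) ∧ C.encard = κ} := by
    ext C
    constructor
    · rintro ⟨r, ⟨hr, hc⟩, rfl⟩
      exact ⟨⟨r, rfl⟩, hc⟩
    · rintro ⟨⟨x, rfl⟩, hc⟩
      refine ⟨qrep Y x, ⟨qrep_idem Y x, ?_⟩, ?_⟩
      · rw [← classOf_eq_of_rel (qrep_rel Y x)]; exact hc
      · exact (classOf_eq_of_rel (qrep_rel Y x)).symm
  have hinj : Set.InjOn Y.classOf {r | qrep Y r = r ∧ (Y.classOf r).encard = κ} := by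
    rintro r ⟨hr, _⟩ r' ⟨hr', _⟩ h
    have : Y.rel r r' := by
      have : r' ∈ Y.classOf r := h ▸ Y.equiv.refl r'
      exact this
    rw [← hr, ← hr']
    exact (qrep_eq_iff Y r r').mpr this
  rw [EqStruct.numClasses, ← himg, hinj.encard_image]

lemma master {X Y : EqStruct} (u v : ℕ → ℕ)
    (hu : ∀ x y, X.rel x y ↔ u x = u y) (hv : ∀ x y, Y.rel x y ↔ v x = v y)
    (h5 : {i | (Fib u i).encard = 5}.encard = {j | (Fib v j).encard = 5}.encard)
    (h1 : {i | (Fib u i).encard = 1}.encard = {j | (Fib v j).encard = 1}.encard)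
    (hufull : ∀ i, (Fib u i).encard = 0 ∨ (Fib u i).encard = 1 ∨ (Fib u i).encard = 5)
    (hvfull : ∀ j, (Fib v j).encard = 0 ∨ (Fib v j).encard = 1 ∨ (Fib v j).encard = 5) :
    X.Isom Y := by
  classical
  have e5 : Nonempty ({x : {i : ℕ // (Fib u i).encard ≠ 0} // (Fib u x.1).encard = 5}
      ≃ {y : {j : ℕ // (Fib v j).encard ≠ 0} // (Fib v y.1).encard = 5}) := by
    have a1 : {x : {i : ℕ // (Fib u i).encard ≠ 0} // (Fib u x.1).encard = 5}
        ≃ {i : ℕ // (Fib u i).encard = 5} :=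
      (Equiv.subtypeSubtypeEquivSubtypeInter (fun i => (Fib u i).encard ≠ 0)
        (fun i => (Fib u i).encard = 5)).trans
        (Equiv.subtypeEquivRight (fun i =>
          ⟨fun h => h.2, fun h => ⟨by rw [h]; decide, h⟩⟩))
    have a2 : {y : {j : ℕ // (Fib v j).encard ≠ 0} // (Fib v y.1).encard = 5}
        ≃ {j : ℕ // (Fib v j).encard = 5} :=
      (Equiv.subtypeSubtypeEquivSubtypeInter (fun j => (Fib v j).encard ≠ 0)
        (fun j => (Fib v j).encard = 5)).trans
        (Equiv.subtypeEquivRight (fun j =>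
          ⟨fun h => h.2, fun h => ⟨by rw [h]; decide, h⟩⟩))
    obtain ⟨w⟩ := equiv_of_encard_eq h5
    exact ⟨a1.trans (w.trans a2.symm)⟩
  have e1 : Nonempty ({x : {i : ℕ // (Fib u i).encard ≠ 0} // ¬ (Fib u x.1).encard = 5}
      ≃ {y : {j : ℕ // (Fib v j).encard ≠ 0} // ¬ (Fib v y.1).encard = 5}) := by
    have a1 : {x : {i : ℕ // (Fib u i).encard ≠ 0} // ¬ (Fib u x.1).encard = 5}
        ≃ {i : ℕ // (Fib u i).encard = 1} :=
      (Equiv.subtypeSubtypeEquivSubtypeInter (fun i => (Fib u i).encard ≠ 0)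
        (fun i => ¬ (Fib u i).encard = 5)).trans
        (Equiv.subtypeEquivRight (fun i => by
          constructor
          · rintro ⟨hne, h5'⟩
            rcases hufull i with h | h | h
            · exact absurd h hne
            · exact h
            · exact absurd h h5'
          · intro h; exact ⟨by rw [h]; decide, by rw [h]; decide⟩))
    have a2 : {y : {j : ℕ // (Fib v j).encard ≠ 0} // ¬ (Fib v y.1).encard = 5}
        ≃ {j : ℕ // (Fib v j).encard = 1} :=
      (Equiv.subtypeSubtypeEquivSubtypeInter (fun j => (Fib v j).encard ≠ 0)
        (fun j => ¬ (Fib v j).encard = 5)).trans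
        (Equiv.subtypeEquivRight (fun j => by
          constructor
          · rintro ⟨hne, h5'⟩
            rcases hvfull j with h | h | h
            · exact absurd h hne
            · exact h
            · exact absurd h h5'
          · intro h; exact ⟨by rw [h]; decide, by rw [h]; decide⟩))
    obtain ⟨w⟩ := equiv_of_encard_eq h1
    exact ⟨a1.trans (w.trans a2.symm)⟩
  obtain ⟨g5⟩ := e5
  obtain ⟨g1⟩ := e1
  set g : {i : ℕ // (Fib u i).encard ≠ 0} ≃ {j : ℕ // (Fib v j).encard ≠ 0} :=
    (Equiv.sumCompl (fun x : {i : ℕ // (Fib u i).encard ≠ 0} => (Fib u x.1).encard = 5)).symm.trans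
      ((Equiv.sumCongr g5 g1).trans (Equiv.sumCompl (fun y : {j : ℕ // (Fib v j).encard ≠ 0} => (Fib v y.1).encard = 5))) with hg
  have hgcard : ∀ x, (Fib v (g x).1).encard = (Fib u x.1).encard := by
    intro x
    by_cases hx : (Fib u x.1).encard = 5
    · have hgx : g x = (g5 ⟨x, hx⟩).1 := by
        rw [hg]
        simp only [Equiv.trans_apply, Equiv.sumCongr_apply]
        rw [Equiv.sumCompl_symm_apply_of_pos (p := fun x : {i : ℕ // (Fib u i).encard ≠ 0} => (Fib u x.1).encard = 5) (a := x) hx]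
        rfl
      rw [hgx, (g5 ⟨x, hx⟩).2, hx]
    · have hgx : g x = (g1 ⟨x, hx⟩).1 := by
        rw [hg]
        simp only [Equiv.trans_apply, Equiv.sumCongr_apply]
        rw [Equiv.sumCompl_symm_apply_of_neg (p := fun x : {i : ℕ // (Fib u i).encard ≠ 0} => (Fib u x.1).encard = 5) (a := x) hx]
        rfl
      rw [hgx]
      have hv1 : ¬ (Fib v ((g1 ⟨x, hx⟩).1).1).encard = 5 := (g1 ⟨x, hx⟩).2
      have hu1 : (Fib u x.1).encard = 1 := by
        rcases hufull x.1 with h | h | h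
        · exact absurd h x.2
        · exact h
        · exact absurd h hx
      have hv1' : (Fib v ((g1 ⟨x, hx⟩).1).1).encard = 1 := by
        rcases hvfull ((g1 ⟨x, hx⟩).1).1 with h | h | h
        · exact absurd h ((g1 ⟨x, hx⟩).1).2
        · exact h
        · exact absurd h hv1
      rw [hv1', hu1]
  have hux : ∀ x : ℕ, (Fib u (u x)).encard ≠ 0 := fun x => Set.encard_ne_zero.mpr ⟨x, rfl⟩
  have hvx : ∀ x : ℕ, (Fib v (v x)).encard ≠ 0 := fun x => Set.encard_ne_zero.mpr ⟨x, rfl⟩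
  set u' : ℕ → {i : ℕ // (Fib u i).encard ≠ 0} := fun x => ⟨u x, hux x⟩ with hu'
  set v' : ℕ → {j : ℕ // (Fib v j).encard ≠ 0} := fun x => ⟨v x, hvx x⟩ with hv'
  have fibeq : ∀ x, Nonempty ({a // u' a = x} ≃ {b // v' b = g x}) := by
    intro x
    have c1 : {a // u' a = x} ≃ (Fib u x.1) :=
      Equiv.subtypeEquivRight (fun a => by rw [Subtype.ext_iff]; exact Iff.rfl)
    have c2 : {b // v' b = g x} ≃ (Fib v (g x).1) :=
      Equiv.subtypeEquivRight (fun b => by rw [Subtype.ext_iff]; exact Iff.rfl)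
    obtain ⟨w⟩ := equiv_of_encard_eq (hgcard x).symm
    exact ⟨c1.trans (w.trans c2.symm)⟩
  have F : ∀ x, {a // u' a = x} ≃ {b // v' b = g x} := fun x => (fibeq x).some
  set f : ℕ ≃ ℕ :=
    (Equiv.sigmaFiberEquiv u').symm.trans ((Equiv.sigmaCongr g F).trans (Equiv.sigmaFiberEquiv v'))
    with hf
  have key : ∀ x, v' (f x) = g (u' x) := by
    intro x
    have : f x = (F (u' x) ⟨x, rfl⟩).1 := rfl
    rw [this]
    exact (F (u' x) ⟨x, rfl⟩).2
  refine ⟨f, f.bijective, fun x y => ?_⟩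
  rw [hu x y, hv (f x) (f y)]
  constructor
  · intro h
    have : u' x = u' y := Subtype.ext h
    have h2 : v' (f x) = v' (f y) := by rw [key, key, this]
    exact congrArg Subtype.val h2
  · intro h
    have h2 : v' (f x) = v' (f y) := Subtype.ext h
    rw [key, key] at h2
    exact Subtype.ext_iff.mp (g.injective h2)

def structOf (c : ℕ → ℕ) : EqStruct :=
  ⟨fun x y => c x = c y, ⟨fun _ => rfl, Eq.symm, Eq.trans⟩⟩

def ShapeA (c : ℕ → ℕ) (m : ℕ) : Prop :=
  (∀ i, (Fib c i).encard = 0 ∨ (Fib c i).encard = 1 ∨ (Fib c i).encard = 5) ∧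
  {i | (Fib c i).encard = 5}.encard = (m : ℕ∞) ∧
  {i | (Fib c i).encard = 1}.Infinite

lemma isomA {c : ℕ → ℕ} {m : ℕ} (Y : EqStruct)
    (hcls : ∀ x, (Y.classOf x).encard = 5 ∨ (Y.classOf x).encard = 1)
    (h5 : Y.numClasses 5 = (m : ℕ∞)) (h1 : Y.numClasses 1 = ⊤)
    (hc : ShapeA c m) : (structOf c).Isom Y := by
  have hvfull : ∀ j, (Fib (qrep Y) j).encard = 0 ∨ (Fib (qrep Y) j).encard = 1 ∨
      (Fib (qrep Y) j).encard = 5 := by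
    intro j
    by_cases hj : qrep Y j = j
    · rw [fib_qrep_rep hj]
      rcases hcls j with h | h
      · exact Or.inr (Or.inr h)
      · exact Or.inr (Or.inl h)
    · rw [fib_qrep_nonrep hj]
      exact Or.inl Set.encard_empty
  refine master c (qrep Y) (fun x y => Iff.rfl) (fun x y => (qrep_eq_iff Y x y).symm) ?_ ?_
    hc.1 hvfull
  · rw [count_qfib Y 5 (by decide), h5, hc.2.1]
  · rw [count_qfib Y 1 (by decide), h1, Set.encard_eq_top hc.2.2]

lemma isomB {X Y : EqStruct}
    (hX : ∀ x, (X.classOf x).encard = 5) (hY : ∀ x, (Y.classOf x).encard = 5) :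
    X.Isom Y := by
  have gen5 : ∀ (Z : EqStruct), (∀ x, (Z.classOf x).encard = 5) →
      {j | (Fib (qrep Z) j).encard = 5} = {r | qrep Z r = r} := by
    intro Z hZ
    ext j
    simp only [Set.mem_setOf_eq]
    by_cases hj : qrep Z j = j
    · rw [fib_qrep_rep hj]
      exact ⟨fun _ => hj, fun _ => hZ j⟩
    · rw [fib_qrep_nonrep hj]
      simp only [Set.encard_empty]
      exact ⟨fun h => absurd h (by decide), fun h => absurd h hj⟩
  have gen1 : ∀ (Z : EqStruct), (∀ x, (Z.classOf x).encard = 5) →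
      {j | (Fib (qrep Z) j).encard = 1} = ∅ := by
    intro Z hZ
    ext j
    simp only [Set.mem_setOf_eq, Set.mem_empty_iff_false, iff_false]
    by_cases hj : qrep Z j = j
    · rw [fib_qrep_rep hj, hZ j]; decide
    · rw [fib_qrep_nonrep hj]; simp
  have repsInf : ∀ (Z : EqStruct), (∀ x, (Z.classOf x).encard = 5) →
      {r | qrep Z r = r}.Infinite := by
    intro Z hZ
    by_contra hfin
    rw [Set.not_infinite] at hfin
    have hcov : (Set.univ : Set ℕ) ⊆ ⋃ r ∈ {r | qrep Z r = r}, Z.classOf r := by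
      intro x _
      refine Set.mem_biUnion (qrep_idem Z x) ?_
      exact Z.equiv.symm (qrep_rel Z x)
    have hfin2 : (⋃ r ∈ {r | qrep Z r = r}, Z.classOf r).Finite := by
      refine Set.Finite.biUnion hfin (fun r _ => ?_)
      have := hZ r
      exact Set.finite_of_encard_eq_coe (by exact_mod_cast this)
    exact Set.infinite_univ (Set.Finite.subset hfin2 hcov)
  have hfull : ∀ (Z : EqStruct), (∀ x, (Z.classOf x).encard = 5) →
      ∀ j, (Fib (qrep Z) j).encard = 0 ∨ (Fib (qrep Z) j).encard = 1 ∨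
        (Fib (qrep Z) j).encard = 5 := by
    intro Z hZ j
    by_cases hj : qrep Z j = j
    · rw [fib_qrep_rep hj]; exact Or.inr (Or.inr (hZ j))
    · rw [fib_qrep_nonrep hj]; exact Or.inl Set.encard_empty
  refine master (qrep X) (qrep Y) (fun x y => (qrep_eq_iff X x y).symm)
    (fun x y => (qrep_eq_iff Y x y).symm) ?_ ?_ (hfull X hX) (hfull Y hY)
  · rw [gen5 X hX, gen5 Y hY, Set.encard_eq_top (repsInf X hX), Set.encard_eq_top (repsInf Y hY)]
  · rw [gen1 X hX, gen1 Y hY]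

lemma isom_symm {X Y : EqStruct} (h : X.Isom Y) : Y.Isom X := by
  obtain ⟨f, hf, hrel⟩ := h
  set e := Equiv.ofBijective f hf with he
  refine ⟨e.symm, e.symm.bijective, fun x y => ?_⟩
  have h1 : f (e.symm x) = x := e.apply_symm_apply x
  have h2 : f (e.symm y) = y := e.apply_symm_apply y
  rw [hrel (e.symm x) (e.symm y), h1, h2]

lemma isom_trans {X Y Z : EqStruct} (h1 : X.Isom Y) (h2 : Y.Isom Z) : X.Isom Z := by
  obtain ⟨f, hf, hrelf⟩ := h1
  obtain ⟨g, hg, hrelg⟩ := h2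
  exact ⟨g ∘ f, hg.comp hf, fun x y => (hrelf x y).trans (hrelg (f x) (f y))⟩

lemma isom_classOf {X Y : EqStruct} {f : ℕ → ℕ} (hf : Function.Bijective f)
    (hrel : ∀ x y, X.rel x y ↔ Y.rel (f x) (f y)) (x : ℕ) :
    f '' X.classOf x = Y.classOf (f x) := by
  ext z
  constructor
  · rintro ⟨w, hw, rfl⟩
    exact (hrel x w).mp hw
  · intro hz
    obtain ⟨w, rfl⟩ := hf.surjective z
    exact ⟨w, (hrel x w).mpr hz, rfl⟩

lemma not_isom_one_five {X Y : EqStruct} (x : ℕ) (hx : (X.classOf x).encard = 1)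
    (hY : ∀ y, (Y.classOf y).encard = 5) : ¬ X.Isom Y := by
  rintro ⟨f, hf, hrel⟩
  have h1 : f '' X.classOf x = Y.classOf (f x) := isom_classOf hf hrel x
  have h2 : (f '' X.classOf x).encard = (X.classOf x).encard :=
    Set.InjOn.encard_image (hf.injective.injOn)
  rw [h1, hx, hY (f x)] at h2
  exact absurd h2 (by decide)

lemma four_fresh {s : Set ℕ} (hs : s.Infinite) (V : Set ℕ) (hV : V.Finite) :
    ∃ i1 i2 i3 i4, i1 ∈ s \ V ∧ i2 ∈ s \ V ∧ i3 ∈ s \ V ∧ i4 ∈ s \ V ∧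
      i1 ≠ i2 ∧ i1 ≠ i3 ∧ i1 ≠ i4 ∧ i2 ≠ i3 ∧ i2 ≠ i4 ∧ i3 ≠ i4 := by
  have h1 := (hs.diff hV)
  obtain ⟨i1, hi1⟩ := h1.nonempty
  have h2 := h1.diff (Set.finite_singleton i1)
  obtain ⟨i2, hi2⟩ := h2.nonempty
  have h3 := h2.diff (Set.finite_singleton i2)
  obtain ⟨i3, hi3⟩ := h3.nonempty
  have h4 := h3.diff (Set.finite_singleton i3)
  obtain ⟨i4, hi4⟩ := h4.nonempty
  refine ⟨i1, i2, i3, i4, hi1, hi2.1, hi3.1.1, hi4.1.1.1, ?_, ?_, ?_, ?_, ?_, ?_⟩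
  · exact fun h => hi2.2 (Set.mem_singleton_iff.mpr h.symm)
  · exact fun h => hi3.1.2 (Set.mem_singleton_iff.mpr h.symm)
  · exact fun h => hi4.1.1.2 (Set.mem_singleton_iff.mpr h.symm)
  · exact fun h => hi3.2 (Set.mem_singleton_iff.mpr h.symm)
  · exact fun h => hi4.1.2 (Set.mem_singleton_iff.mpr h.symm)
  · exact fun h => hi4.2 (Set.mem_singleton_iff.mpr h.symm)

lemma complete_one {c : ℕ → ℕ} {m : ℕ} (hc : ShapeA c m) (k : ℕ) (Co : Set ℕ)
    (hCo : Co.Finite) :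
    ∃ (c' : ℕ → ℕ) (m' : ℕ), ShapeA c' m' ∧
      (∀ x, (Fib c (c x)).encard = 5 → Fib c' (c' x) = Fib c (c x)) ∧
      (∀ a ∈ Co, c' a = c a) ∧
      (Fib c' (c' k)).encard = 5 := by
  classical
  have hk0 : (Fib c (c k)).encard ≠ 0 := Set.encard_ne_zero.mpr ⟨k, rfl⟩
  rcases hc.1 (c k) with h | hk1 | hk5
  · exact absurd h hk0
  swap
  · exact ⟨c, m, hc, fun x _ => rfl, fun a _ => rfl, hk5⟩
  · have hfibk : Fib c (c k) = {k} := by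
      obtain ⟨a, ha⟩ := Set.encard_eq_one.mp hk1
      have hk : k ∈ Fib c (c k) := rfl
      rw [ha] at hk ⊢
      rw [Set.mem_singleton_iff.mp hk]
    set V : Set ℕ := (c '' Co) ∪ {c k} with hVdef
    have hVfin : V.Finite := (hCo.image c).union (Set.finite_singleton _)
    obtain ⟨i1, i2, i3, i4, hi1, hi2, hi3, hi4, d12, d13, d14, d23, d24, d34⟩ :=
      four_fresh hc.2.2 V hVfin
    have hiV : ∀ l ∈ ({i1, i2, i3, i4} : Set ℕ), (Fib c l).encard = 1 ∧ l ∉ V := by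
      intro l hl
      rcases hl with rfl | rfl | rfl | rfl
      · exact ⟨hi1.1, hi1.2⟩
      · exact ⟨hi2.1, hi2.2⟩
      · exact ⟨hi3.1, hi3.2⟩
      · exact ⟨hi4.1, hi4.2⟩
    have hick : ∀ l ∈ ({i1, i2, i3, i4} : Set ℕ), l ≠ c k := by
      intro l hl h
      exact (hiV l hl).2 (Set.mem_union_right _ (h ▸ rfl))
    obtain ⟨a1, ha1⟩ := Set.encard_eq_one.mp (hiV i1 (by simp)).1
    obtain ⟨a2, ha2⟩ := Set.encard_eq_one.mp (hiV i2 (by simp)).1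
    obtain ⟨a3, ha3⟩ := Set.encard_eq_one.mp (hiV i3 (by simp)).1
    obtain ⟨a4, ha4⟩ := Set.encard_eq_one.mp (hiV i4 (by simp)).1
    have hca1 : c a1 = i1 := by have h : a1 ∈ Fib c i1 := ha1 ▸ rfl; exact h
    have hca2 : c a2 = i2 := by have h : a2 ∈ Fib c i2 := ha2 ▸ rfl; exact h
    have hca3 : c a3 = i3 := by have h : a3 ∈ Fib c i3 := ha3 ▸ rfl; exact h
    have hca4 : c a4 = i4 := by have h : a4 ∈ Fib c i4 := ha4 ▸ rfl; exact h
    have ha1k : a1 ≠ k := fun h => hick i1 (by simp) (by rw [← hca1, h])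
    have ha2k : a2 ≠ k := fun h => hick i2 (by simp) (by rw [← hca2, h])
    have ha3k : a3 ≠ k := fun h => hick i3 (by simp) (by rw [← hca3, h])
    have ha4k : a4 ≠ k := fun h => hick i4 (by simp) (by rw [← hca4, h])
    have ha12 : a1 ≠ a2 := fun h => d12 (by rw [← hca1, ← hca2, h])
    have ha13 : a1 ≠ a3 := fun h => d13 (by rw [← hca1, ← hca3, h])
    have ha14 : a1 ≠ a4 := fun h => d14 (by rw [← hca1, ← hca4, h])
    have ha23 : a2 ≠ a3 := fun h => d23 (by rw [← hca2, ← hca3, h])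
    have ha24 : a2 ≠ a4 := fun h => d24 (by rw [← hca2, ← hca4, h])
    have ha34 : a3 ≠ a4 := fun h => d34 (by rw [← hca3, ← hca4, h])
    set P : ℕ → Prop := fun x => c x = i1 ∨ c x = i2 ∨ c x = i3 ∨ c x = i4 with hPdef
    have hPdec : DecidablePred P := fun x => by rw [hPdef]; infer_instance
    set c' : ℕ → ℕ := fun x => @ite _ (P x) (hPdec x) (c k) (c x) with hc'def
    have hc'pos : ∀ x, P x → c' x = c k := fun x hx => if_pos hx
    have hc'neg : ∀ x, ¬ P x → c' x = c x := fun x hx => if_neg hx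
    have hnotPk : ¬ P k := by
      rintro (h | h | h | h)
      · exact hick i1 (by simp) (by rw [← h])
      · exact hick i2 (by simp) (by rw [← h])
      · exact hick i3 (by simp) (by rw [← h])
      · exact hick i4 (by simp) (by rw [← h])
    have hPval : ∀ x, P x → x = a1 ∨ x = a2 ∨ x = a3 ∨ x = a4 := by
      intro x hx
      rcases hx with h | h | h | h
      · left; exact Set.mem_singleton_iff.mp (ha1 ▸ (h : x ∈ Fib c i1))
      · right; left; exact Set.mem_singleton_iff.mp (ha2 ▸ (h : x ∈ Fib c i2))
      · right; right; left; exact Set.mem_singleton_iff.mp (ha3 ▸ (h : x ∈ Fib c i3))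
      · right; right; right; exact Set.mem_singleton_iff.mp (ha4 ▸ (h : x ∈ Fib c i4))
    have hPa : ∀ x, (x = a1 ∨ x = a2 ∨ x = a3 ∨ x = a4) → P x := by
      rintro x (rfl | rfl | rfl | rfl)
      · exact Or.inl hca1
      · exact Or.inr (Or.inl hca2)
      · exact Or.inr (Or.inr (Or.inl hca3))
      · exact Or.inr (Or.inr (Or.inr hca4))
    -- fiber computations
    have fib_other : ∀ j, j ≠ c k → j ∉ ({i1,i2,i3,i4} : Set ℕ) → Fib c' j = Fib c j := by
      intro j hj hji
      ext x
      simp only [mem_Fib]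
      by_cases hP : P x
      · rw [hc'pos x hP]
        constructor
        · intro h; exact absurd h.symm hj
        · intro h
          exfalso
          apply hji
          rcases hP with h' | h' | h' | h' <;> rw [h'] at h
          · exact Or.inl h.symm
          · exact Or.inr (Or.inl h.symm)
          · exact Or.inr (Or.inr (Or.inl h.symm))
          · exact Or.inr (Or.inr (Or.inr h.symm))
      · rw [hc'neg x hP]
    have fib_i : ∀ l ∈ ({i1,i2,i3,i4} : Set ℕ), Fib c' l = ∅ := by
      intro l hl
      ext x
      simp only [mem_Fib, Set.mem_empty_iff_false, iff_false]
      intro h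
      by_cases hP : P x
      · rw [hc'pos x hP] at h
        exact hick l hl h.symm
      · rw [hc'neg x hP] at h
        apply hP
        rw [hPdef]
        rcases hl with rfl | rfl | rfl | rfl
        · exact Or.inl h
        · exact Or.inr (Or.inl h)
        · exact Or.inr (Or.inr (Or.inl h))
        · exact Or.inr (Or.inr (Or.inr h))
    have fib_ck : Fib c' (c k) = ({k, a1, a2, a3, a4} : Set ℕ) := by
      ext x
      simp only [mem_Fib, Set.mem_insert_iff, Set.mem_singleton_iff]
      constructor
      · intro h
        by_cases hP : P x
        · rcases hPval x hP with rfl | rfl | rfl | rfl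
          · exact Or.inr (Or.inl rfl)
          · exact Or.inr (Or.inr (Or.inl rfl))
          · exact Or.inr (Or.inr (Or.inr (Or.inl rfl)))
          · exact Or.inr (Or.inr (Or.inr (Or.inr rfl)))
        · rw [hc'neg x hP] at h
          have : x ∈ Fib c (c k) := h
          rw [hfibk] at this
          exact Or.inl (Set.mem_singleton_iff.mp this)
      · rintro (rfl | hx)
        · rw [hc'neg x hnotPk]
        · exact hc'pos x (hPa x hx)
    have hknotmem : k ∉ ({a1, a2, a3, a4} : Set ℕ) := by
      intro hmem
      rcases hmem with h | h | h | h
      · exact ha1k h.symm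
      · exact ha2k h.symm
      · exact ha3k h.symm
      · exact ha4k (Set.mem_singleton_iff.mp h).symm
    have enc5 : ({k, a1, a2, a3, a4} : Set ℕ).encard = 5 := by
      rw [Set.encard_insert_of_notMem hknotmem,
        Set.encard_insert_of_notMem (by
          intro hmem
          rcases hmem with h | h | h
          · exact ha12 h
          · exact ha13 h
          · exact ha14 (Set.mem_singleton_iff.mp h)),
        Set.encard_insert_of_notMem (by
          intro hmem
          rcases hmem with h | h
          · exact ha23 h
          · exact ha24 (Set.mem_singleton_iff.mp h)),
        Set.encard_insert_of_notMem (by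
          intro hmem
          exact ha34 (Set.mem_singleton_iff.mp hmem)),
        Set.encard_singleton]
      decide
    have hGoal : (Fib c' (c' k)).encard = 5 := by
      rw [hc'neg k hnotPk, fib_ck]
      exact enc5
    have shape5 : {j | (Fib c' j).encard = 5} = insert (c k) {j | (Fib c j).encard = 5} := by
      ext j
      simp only [Set.mem_setOf_eq, Set.mem_insert_iff]
      by_cases hj : j = c k
      · subst hj
        rw [fib_ck]
        simp [enc5]
      · by_cases hji : j ∈ ({i1,i2,i3,i4} : Set ℕ)
        · rw [fib_i j hji]
          simp only [Set.encard_empty]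
          constructor
          · intro h; exact absurd h (by decide)
          · rintro (h | h)
            · exact absurd h hj
            · rw [(hiV j hji).1] at h; exact absurd h (by decide)
        · rw [fib_other j hj hji]
          exact ⟨fun h => Or.inr h, fun h => h.resolve_left hj⟩
    have shape1 : {j | (Fib c' j).encard = 1}
        = {j | (Fib c j).encard = 1} \ ({c k} ∪ {i1,i2,i3,i4}) := by
      ext j
      simp only [Set.mem_setOf_eq, Set.mem_diff, Set.mem_union, Set.mem_singleton_iff]
      by_cases hj : j = c k
      · subst hj
        rw [hc'neg k hnotPk] at hGoal
        rw [hGoal]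
        constructor
        · intro h; exact absurd h (by decide)
        · rintro ⟨_, h⟩; exact absurd (Or.inl rfl) h
      · by_cases hji : j ∈ ({i1,i2,i3,i4} : Set ℕ)
        · rw [fib_i j hji]
          simp only [Set.encard_empty]
          constructor
          · intro h; exact absurd h (by decide)
          · rintro ⟨_, h⟩; exact absurd (Or.inr hji) h
        · rw [fib_other j hj hji]
          exact ⟨fun h => ⟨h, fun hh => hh.elim hj hji⟩, fun h => h.1⟩
    refine ⟨c', m + 1, ⟨?_, ?_, ?_⟩, ?_, ?_, hGoal⟩
    · intro j
      by_cases hj : j = c k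
      · subst hj
        rw [hc'neg k hnotPk] at hGoal
        rw [hGoal]
        exact Or.inr (Or.inr rfl)
      · by_cases hji : j ∈ ({i1,i2,i3,i4} : Set ℕ)
        · rw [fib_i j hji]
          exact Or.inl Set.encard_empty
        · rw [fib_other j hj hji]
          exact hc.1 j
    · rw [shape5, Set.encard_insert_of_notMem (by
        simp only [Set.mem_setOf_eq]
        rw [hk1]
        decide), hc.2.1]
      exact (Nat.cast_add_one m).symm
    · rw [shape1]
      exact hc.2.2.diff ((Set.finite_singleton _).union (Set.toFinite _))
    · intro x hx
      have hcx1 : c x ∉ ({i1,i2,i3,i4} : Set ℕ) := by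
        intro hmem
        rw [(hiV (c x) hmem).1] at hx
        exact absurd hx (by decide)
      have hPx : ¬ P x := by
        intro hP
        apply hcx1
        rcases hP with h | h | h | h
        · exact Or.inl h
        · exact Or.inr (Or.inl h)
        · exact Or.inr (Or.inr (Or.inl h))
        · exact Or.inr (Or.inr (Or.inr h))
      have hcxck : c x ≠ c k := by
        intro h
        rw [h, hk1] at hx
        exact absurd hx (by decide)
      rw [hc'neg x hPx]
      exact fib_other (c x) hcxck hcx1
    · intro a ha
      apply hc'neg
      intro hP
      have hmem : c a ∈ V := Set.mem_union_left _ ⟨a, ha, rfl⟩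
      rcases hP with h | h | h | h
      · exact hi1.2 (h ▸ hmem)
      · exact hi2.2 (h ▸ hmem)
      · exact hi3.2 (h ▸ hmem)
      · exact hi4.2 (h ▸ hmem)

/-- canonical informant for `structOf c` with listing `L` -/
def J (c : ℕ → ℕ) (L : ℕ → ℕ × ℕ) (n : ℕ) : (ℕ × ℕ) × Bool :=
  (L n, decide (c (L n).1 = c (L n).2))

lemma isInformant_J (c : ℕ → ℕ) (L : ℕ → ℕ × ℕ) (hL : Function.Surjective L) :
    IsInformant (structOf c) (J c L) := by
  constructor
  · intro p
    obtain ⟨n, hn⟩ := hL p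
    exact ⟨n, hn⟩
  · intro n
    simp only [J, decide_eq_true_eq]
    exact Iff.rfl

structure St where
  c : ℕ → ℕ
  L : ℕ → ℕ × ℕ
  t : ℕ
  e : ℕ
  m : ℕ

variable (Me : ℕ → EqStruct) (M : Learner)

def StepRel (k : ℕ) (s s' : St) : Prop :=
  ShapeA s'.c s'.m ∧ Function.Surjective s'.L ∧
  (∀ i < s.t, s'.L i = s.L i) ∧ s.t < s'.t ∧
  (∃ i < s'.t, s'.L i = Nat.unpair k) ∧
  (∀ x, (Fib s.c (s.c x)).encard = 5 → Fib s'.c (s'.c x) = Fib s.c (s.c x)) ∧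
  (∀ i < s.t, s'.c (s.L i).1 = s.c (s.L i).1 ∧ s'.c (s.L i).2 = s.c (s.L i).2) ∧
  (Fib s'.c (s'.c k)).encard = 5 ∧
  M (seg (J s'.c s'.L) s'.t) = some s'.e ∧
  (Me s'.e).Isom (structOf s'.c)

lemma unpair_surj : Function.Surjective (Nat.unpair) := by
  intro p
  exact ⟨Nat.pair p.1 p.2, by simp⟩

lemma step_exists (A : ℕ → EqStruct)
    (hA : ∀ n : ℕ,
      (∀ x, ((A n).classOf x).encard = 5 ∨ ((A n).classOf x).encard = 1) ∧
      (A n).numClasses 5 = (n : ℕ∞) ∧ (A n).numClasses 1 = ⊤)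
    (hM : ∀ n, InfExLearns Me EqStruct.Isom M (A n))
    (k : ℕ) (s : St) (hc : ShapeA s.c s.m) (hL : Function.Surjective s.L) :
    ∃ s', StepRel Me M k s s' := by
  classical
  set Co : Set ℕ := ((fun i => (s.L i).1) '' (Set.Iio s.t)) ∪
    ((fun i => (s.L i).2) '' (Set.Iio s.t)) with hCo
  have hCofin : Co.Finite :=
    ((Set.finite_Iio s.t).image _).union ((Set.finite_Iio s.t).image _)
  obtain ⟨c', m', hc', hfib, hpt, hG⟩ := complete_one hc k Co hCofin
  set L' : ℕ → ℕ × ℕ := fun i => if i < s.t then s.L i else Nat.unpair (i - s.t) with hL'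
  have hL'surj : Function.Surjective L' := by
    intro p
    obtain ⟨n, hn⟩ := unpair_surj p
    refine ⟨s.t + n, ?_⟩
    rw [hL']
    simp only [add_lt_iff_neg_left, Nat.not_lt_zero, if_false, Nat.add_sub_cancel_left]
    simpa using hn
  have hIsom : (structOf c').Isom (A m') := isomA (A m') (hA m').1 (hA m').2.1 (hA m').2.2 hc'
  obtain ⟨e, hIsomE, N, hconv⟩ :=
    hM m' (structOf c') hIsom (J c' L') (isInformant_J c' L' hL'surj)
  refine ⟨⟨c', L', max N (s.t + k + 1), e, m'⟩, hc', hL'surj, ?_, ?_, ?_, hfib, ?_, hG, ?_, hIsomE⟩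
  · intro i hi
    simp only [hL', if_pos hi]
  · simp only []
    calc s.t < s.t + k + 1 := by omega
    _ ≤ max N (s.t + k + 1) := le_max_right _ _
  · refine ⟨s.t + k, ?_, ?_⟩
    · exact lt_of_lt_of_le (by omega) (le_max_right _ _)
    · rw [hL']
      simp only [add_lt_iff_neg_left, Nat.not_lt_zero, if_false, Nat.add_sub_cancel_left]
  · intro i hi
    constructor
    · exact hpt _ (Set.mem_union_left _ ⟨i, hi, rfl⟩)
    · exact hpt _ (Set.mem_union_right _ ⟨i, hi, rfl⟩)
  · exact hconv _ (le_max_left _ _)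

-- initial stage
def st0 : St := ⟨id, Nat.unpair, 0, 0, 0⟩

lemma shape_id : ShapeA id 0 := by
  have hfib : ∀ i, Fib id i = {i} := by
    intro i; ext x; simp [Fib]
  refine ⟨fun i => by rw [hfib]; exact Or.inr (Or.inl (Set.encard_singleton i)), ?_, ?_⟩
  · have : {i : ℕ | (Fib id i).encard = 5} = ∅ := by
      ext i
      simp only [Set.mem_setOf_eq, hfib, Set.encard_singleton, Set.mem_empty_iff_false,
        iff_false]
      decide
    rw [this, Set.encard_empty, Nat.cast_zero]
  · have : {i : ℕ | (Fib id i).encard = 1} = Set.univ := by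
      ext i; simp [hfib]
    rw [this]
    exact Set.infinite_univ

noncomputable def seqSt (Me : ℕ → EqStruct) (M : Learner) (A : ℕ → EqStruct)
    (hA : ∀ n : ℕ,
      (∀ x, ((A n).classOf x).encard = 5 ∨ ((A n).classOf x).encard = 1) ∧
      (A n).numClasses 5 = (n : ℕ∞) ∧ (A n).numClasses 1 = ⊤)
    (hM : ∀ n, InfExLearns Me EqStruct.Isom M (A n)) :
    (k : ℕ) → {s : St // ShapeA s.c s.m ∧ Function.Surjective s.L} := fun k =>
  Nat.rec
    (⟨Classical.choose (step_exists Me M A hA hM 0 st0 shape_id unpair_surj),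
      (Classical.choose_spec (step_exists Me M A hA hM 0 st0 shape_id unpair_surj)).1,
      (Classical.choose_spec (step_exists Me M A hA hM 0 st0 shape_id unpair_surj)).2.1⟩)
    (fun k ih =>
      ⟨Classical.choose (step_exists Me M A hA hM (k+1) ih.1 ih.2.1 ih.2.2),
       (Classical.choose_spec (step_exists Me M A hA hM (k+1) ih.1 ih.2.1 ih.2.2)).1,
       (Classical.choose_spec (step_exists Me M A hA hM (k+1) ih.1 ih.2.1 ih.2.2)).2.1⟩)
    k

lemma seqSt_spec0 (Me M A hA hM) :
    StepRel Me M 0 st0 (seqSt Me M A hA hM 0).1 :=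
  Classical.choose_spec (step_exists Me M A hA hM 0 st0 shape_id unpair_surj)

lemma seqSt_specS (Me M A hA hM) (k : ℕ) :
    StepRel Me M (k+1) (seqSt Me M A hA hM k).1 (seqSt Me M A hA hM (k+1)).1 :=
  Classical.choose_spec (step_exists Me M A hA hM (k+1) (seqSt Me M A hA hM k).1
    (seqSt Me M A hA hM k).2.1 (seqSt Me M A hA hM k).2.2)


/-- the family `{[5:n, 1:ω] : n ∈ ω} ∪ {[5:ω]}` is not InfEx-learnable up
to isomorphism. -/
theorem stmt19 (Me : ℕ → EqStruct) (A : ℕ → EqStruct) (B : EqStruct)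
    (hA : ∀ n : ℕ,
      (∀ x, ((A n).classOf x).encard = 5 ∨ ((A n).classOf x).encard = 1) ∧
      (A n).numClasses 5 = (n : ℕ∞) ∧ (A n).numClasses 1 = ⊤)
    (hB : ∀ x, (B.classOf x).encard = 5) :
    ¬ ∃ M : Learner, (∀ n, InfExLearns Me EqStruct.Isom M (A n)) ∧
      InfExLearns Me EqStruct.Isom M B := by
  rintro ⟨M, hMA, hMB⟩
  classical
  set s_ : ℕ → St := fun k => (seqSt Me M A hA hMA k).1 with hs_
  have R0 : StepRel Me M 0 st0 (s_ 0) := seqSt_spec0 Me M A hA hMA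
  have RS : ∀ k, StepRel Me M (k+1) (s_ k) (s_ (k+1)) := fun k => seqSt_specS Me M A hA hMA k
  have RALL : ∀ k, ShapeA (s_ k).c (s_ k).m ∧
      (∃ i < (s_ k).t, (s_ k).L i = Nat.unpair k) ∧
      M (seg (J (s_ k).c (s_ k).L) (s_ k).t) = some (s_ k).e ∧
      (Me (s_ k).e).Isom (structOf (s_ k).c) := by
    intro k
    cases k with
    | zero => exact ⟨R0.1, R0.2.2.2.2.1, R0.2.2.2.2.2.2.2.2.1, R0.2.2.2.2.2.2.2.2.2⟩
    | succ k => exact ⟨(RS k).1, (RS k).2.2.2.2.1, (RS k).2.2.2.2.2.2.2.2.1,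
        (RS k).2.2.2.2.2.2.2.2.2⟩
  have tpos : ∀ k, k < (s_ k).t := by
    intro k
    induction k with
    | zero => exact R0.2.2.2.1
    | succ k ih => exact lt_of_le_of_lt (by omega : k + 1 ≤ (s_ k).t) (RS k).2.2.2.1
  have tmono : ∀ k k', k ≤ k' → (s_ k).t ≤ (s_ k').t := by
    intro k k' h
    induction k', h using Nat.le_induction with
    | base => exact le_refl _
    | succ k' hk ih => exact le_trans ih (le_of_lt (RS k').2.2.2.1)
  have Lstab : ∀ k k', k ≤ k' → ∀ i < (s_ k).t, (s_ k').L i = (s_ k).L i := by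
    intro k k' h
    induction k', h using Nat.le_induction with
    | base => intro i _; rfl
    | succ k' hk ih =>
        intro i hi
        rw [(RS k').2.2.1 i (lt_of_lt_of_le hi (tmono k k' hk)), ih i hi]
  have cstab : ∀ k k', k ≤ k' → ∀ i < (s_ k).t,
      (s_ k').c ((s_ k).L i).1 = (s_ k).c ((s_ k).L i).1 ∧
      (s_ k').c ((s_ k).L i).2 = (s_ k).c ((s_ k).L i).2 := by
    intro k k' h
    induction k', h using Nat.le_induction with
    | base => intro i _; exact ⟨rfl, rfl⟩
    | succ k' hk ih =>
        intro i hi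
        have h7 := (RS k').2.2.2.2.2.2.1 i (lt_of_lt_of_le hi (tmono k k' hk))
        rw [Lstab k k' hk i hi] at h7
        exact ⟨h7.1.trans (ih i hi).1, h7.2.trans (ih i hi).2⟩
  have freeze : ∀ k x, x ≤ k → (Fib (s_ k).c ((s_ k).c x)).encard = 5 := by
    intro k
    induction k with
    | zero =>
        intro x hx
        have hx0 : x = 0 := Nat.le_zero.mp hx
        subst hx0
        exact R0.2.2.2.2.2.2.2.1
    | succ k ih =>
        intro x hx
        rcases Nat.lt_or_ge x (k+1) with h | h
        · have h5 := ih x (by omega)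
          rw [(RS k).2.2.2.2.2.1 x h5]
          exact h5
        · have hx1 : x = k + 1 := by omega
          subst hx1
          exact (RS k).2.2.2.2.2.2.2.1
  have fibstab : ∀ x k k', x ≤ k → k ≤ k' →
      Fib (s_ k').c ((s_ k').c x) = Fib (s_ k).c ((s_ k).c x) := by
    intro x k k' hxk h
    induction k', h using Nat.le_induction with
    | base => rfl
    | succ k' hk ih =>
        have h5 : (Fib (s_ k').c ((s_ k').c x)).encard = 5 := by
          rw [ih]; exact freeze k x hxk
        rw [(RS k').2.2.2.2.2.1 x h5]
        exact ih
  have stab : ∀ x y k, max x y ≤ k →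
      ((s_ k).c x = (s_ k).c y ↔ (s_ (max x y)).c x = (s_ (max x y)).c y) := by
    intro x y k hk
    have e1 : Fib (s_ k).c ((s_ k).c x) = Fib (s_ (max x y)).c ((s_ (max x y)).c x) :=
      fibstab x (max x y) k (le_max_left x y) hk
    constructor
    · intro h
      have hm : y ∈ Fib (s_ k).c ((s_ k).c x) := h.symm
      rw [e1] at hm
      exact (hm : (s_ (max x y)).c y = _).symm
    · intro h
      have hm : y ∈ Fib (s_ (max x y)).c ((s_ (max x y)).c x) := h.symm
      rw [← e1] at hm
      exact (hm : (s_ k).c y = _).symm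
  set RI : ℕ → ℕ → Prop := fun x y => (s_ (max x y)).c x = (s_ (max x y)).c y with hRI
  have RIequiv : Equivalence RI := by
    constructor
    · intro x; exact rfl
    · intro x y h
      show (s_ (max y x)).c y = (s_ (max y x)).c x
      rw [Nat.max_comm y x]
      exact h.symm
    · intro x y z hxy hyz
      set k0 := max (max x y) (max y z) with hk0
      have h1 : (s_ k0).c x = (s_ k0).c y := (stab x y k0 (le_max_left _ _)).mpr hxy
      have h2 : (s_ k0).c y = (s_ k0).c z := (stab y z k0 (le_max_right _ _)).mpr hyz
      exact (stab x z k0 (max_le (le_trans (le_max_left x y) (le_max_left _ _))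
        (le_trans (le_max_right y z) (le_max_right _ _)))).mp (h1.trans h2)
  set Einf : EqStruct := ⟨RI, RIequiv⟩ with hEinf
  have EinfCls : ∀ x, (Einf.classOf x).encard = 5 := by
    intro x
    have hcl : Einf.classOf x = Fib (s_ x).c ((s_ x).c x) := by
      ext y
      show RI x y ↔ (s_ x).c y = (s_ x).c x
      have e1 : Fib (s_ (max x y)).c ((s_ (max x y)).c x) = Fib (s_ x).c ((s_ x).c x) :=
        fibstab x x (max x y) le_rfl (le_max_left x y)
      constructor
      · intro h
        have hm : y ∈ Fib (s_ (max x y)).c ((s_ (max x y)).c x) := (h : _ = _).symm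
        rw [e1] at hm
        exact hm
      · intro h
        have hm : y ∈ Fib (s_ x).c ((s_ x).c x) := h
        rw [← e1] at hm
        exact (hm : (s_ (max x y)).c y = _).symm
    rw [hcl]
    exact freeze x x le_rfl
  set LI : ℕ → ℕ × ℕ := fun i => (s_ i).L i with hLI
  have LIstab : ∀ k, ∀ i < (s_ k).t, LI i = (s_ k).L i := by
    intro k i hi
    rcases le_total i k with h | h
    · exact (Lstab i k h i (tpos i)).symm
    · exact Lstab k i h i hi
  set II : ℕ → (ℕ × ℕ) × Bool := fun n =>
    ((LI n), decide ((s_ (max (LI n).1 (LI n).2)).c (LI n).1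
      = (s_ (max (LI n).1 (LI n).2)).c (LI n).2)) with hII
  have hInf : IsInformant Einf II := by
    constructor
    · intro p
      obtain ⟨j, hj⟩ := unpair_surj p
      obtain ⟨i, hit, hLi⟩ := (RALL j).2.1
      exact ⟨i, by rw [hII]; simp only; rw [LIstab j i hit, hLi, hj]⟩
    · intro n
      show (decide _ = true) ↔ _
      rw [decide_eq_true_eq]
  have hseg : ∀ k, seg II (s_ k).t = seg (J (s_ k).c (s_ k).L) (s_ k).t := by
    intro k
    unfold seg
    apply List.map_congr_left
    intro i hi
    have hik : i < (s_ k).t := List.mem_range.mp hi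
    have hL : LI i = (s_ k).L i := LIstab k i hik
    rw [hII, J]
    simp only
    rw [hL]
    congr 1
    rw [decide_eq_decide]
    set a := ((s_ k).L i).1 with ha
    set b := ((s_ k).L i).2 with hb
    set k0 := max k (max a b) with hk0
    have hst := stab a b k0 (le_max_right _ _)
    have hcs := cstab k k0 (le_max_left _ _) i hik
    rw [← ha, ← hb] at hcs
    constructor
    · intro h
      rw [← hcs.1, ← hcs.2]
      exact hst.mpr h
    · intro h
      apply hst.mp
      rw [hcs.1, hcs.2]
      exact h
  have hEB : Einf.Isom B := isomB EinfCls hB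
  obtain ⟨e, hIsomE, N, hconv⟩ := hMB Einf hEB II hInf
  have h1 : M (seg II (s_ N).t) = some e := hconv _ (le_of_lt (tpos N))
  rw [hseg N] at h1
  have h2 : M (seg (J (s_ N).c (s_ N).L) (s_ N).t) = some (s_ N).e := (RALL N).2.2.1
  have hee : e = (s_ N).e := Option.some.inj (h1.symm.trans h2)
  have hIsomA : (Me e).Isom (structOf (s_ N).c) := hee ▸ (RALL N).2.2.2
  have hcontr : (structOf (s_ N).c).Isom Einf := isom_trans (isom_symm hIsomA) hIsomE
  obtain ⟨i, hi1⟩ := (RALL N).1.2.2.nonempty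
  have hi1' : (Fib (s_ N).c i).encard = 1 := hi1
  obtain ⟨x, hx⟩ := Set.encard_eq_one.mp hi1'
  have hcx : (s_ N).c x = i := by
    have : x ∈ Fib (s_ N).c i := by rw [hx]; rfl
    exact this
  have hclx : (structOf (s_ N).c).classOf x = Fib (s_ N).c i := by
    ext y
    show (s_ N).c x = (s_ N).c y ↔ (s_ N).c y = i
    rw [hcx]
    exact eq_comm
  exact not_isom_one_five x (by rw [hclx]; exact hi1') EinfCls hcontr
end
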